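/- (Proposition 4.2) For every construction G with root graph D, every X in {W,E}, every Y in {N,S} and every edge h of D: h=YX(G) if and only if h is an X-edge of D such that every path of D that covers h is a YX-path in λ(G). -/

import Mathlib

namespace PluralCuts

/-- The two horizontal directions: west and east. -/
inductive XDir : Type
  | W
  | E
deriving DecidableEq

/-- The two vertical directions: north and south. -/
inductive YDir : Type
  | N
  | S
deriving DecidableEq

/-- The other element of `{W, E}`. -/
def XDir.other : XDir → XDir
  | .W => .E
  | .E => .W

/-- A helper choosing between two values according to an `XDir`. -/
def pick {α : Type*} (w e : α) : XDir → α
  | .W => w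
  | .E => e

/-- A digraph on (a finite set of) natural-number vertices: a finite set of
vertices together with a finite set of edges (ordered pairs). -/
structure DG : Type where
  verts : Finset ℕ
  edges : Finset (ℕ × ℕ)

namespace DG

/-- `D` is an oriented graph: edges lie between vertices, the edge relation is
irreflexive and antisymmetric, and the vertex set is nonempty. -/
def IsOriented (D : DG) : Prop :=
  (∀ e ∈ D.edges, e.1 ∈ D.verts ∧ e.2 ∈ D.verts) ∧
  (∀ e ∈ D.edges, e.1 ≠ e.2) ∧
  (∀ a b : ℕ, (a, b) ∈ D.edges → (b, a) ∉ D.edges) ∧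
  D.verts.Nonempty

/-- A `W`-vertex: no edge ends in it. -/
def isWVert (D : DG) (a : ℕ) : Prop := a ∈ D.verts ∧ ∀ b, (b, a) ∉ D.edges

/-- An `E`-vertex: no edge begins in it. -/
def isEVert (D : DG) (a : ℕ) : Prop := a ∈ D.verts ∧ ∀ b, (a, b) ∉ D.edges

/-- An inner vertex: some edge ends in it and some edge begins in it. -/
def isInner (D : DG) (a : ℕ) : Prop :=
  a ∈ D.verts ∧ (∃ b, (b, a) ∈ D.edges) ∧ (∃ b, (a, b) ∈ D.edges)

/-- A `W`-edge: an edge beginning in a `W`-vertex. -/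
def isWEdge (D : DG) (e : ℕ × ℕ) : Prop := e ∈ D.edges ∧ D.isWVert e.1

/-- An `E`-edge: an edge ending in an `E`-vertex. -/
def isEEdge (D : DG) (e : ℕ × ℕ) : Prop := e ∈ D.edges ∧ D.isEVert e.2

/-- An `X`-edge, for `X ∈ {W, E}`. -/
def isXEdge (D : DG) : XDir → (ℕ × ℕ) → Prop
  | .W => D.isWEdge
  | .E => D.isEEdge

/-- An inner edge: it begins and ends in inner vertices. -/
def isInnerEdge (D : DG) (e : ℕ × ℕ) : Prop :=
  e ∈ D.edges ∧ D.isInner e.1 ∧ D.isInner e.2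

/-- A functional `W`-edge `(a,b)`: `(a,c) ∈ D` implies `b = c`. -/
def funcWEdge (D : DG) (e : ℕ × ℕ) : Prop :=
  D.isWEdge e ∧ ∀ c, (e.1, c) ∈ D.edges → c = e.2

/-- A functional `E`-edge `(b,a)`: `(c,a) ∈ D` implies `b = c`. -/
def funcEEdge (D : DG) (e : ℕ × ℕ) : Prop :=
  D.isEEdge e ∧ ∀ c, (c, e.2) ∈ D.edges → c = e.1

/-- `D` is `W`-`E`-functional: all its `W`-edges and `E`-edges are functional. -/
def WEFunctional (D : DG) : Prop :=
  (∀ e, D.isWEdge e → D.funcWEdge e) ∧ (∀ e, D.isEEdge e → D.funcEEdge e)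

/-- Semi-adjacency: `(a,b)` or `(b,a)` is an edge. -/
def semiAdj (D : DG) (a b : ℕ) : Prop := (a, b) ∈ D.edges ∨ (b, a) ∈ D.edges

/-- A semipath: a nonempty sequence of mutually distinct vertices in which any
two consecutive vertices are semi-adjacent. -/
def IsSemipath (D : DG) (l : List ℕ) : Prop :=
  l ≠ [] ∧ (∀ a ∈ l, a ∈ D.verts) ∧ l.Nodup ∧ l.Chain' D.semiAdj

/-- A path: a nonempty sequence of mutually distinct vertices in which
`(a_i, a_{i+1})` is an edge for consecutive vertices. -/
def IsPath (D : DG) (l : List ℕ) : Prop :=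
  l ≠ [] ∧ (∀ a ∈ l, a ∈ D.verts) ∧ l.Nodup ∧
    l.Chain' (fun a b => (a, b) ∈ D.edges)

/-- A semicycle: a sequence `a_1, ..., a_n` of vertices with `n ≥ 4`,
`a_1 = a_n`, `a_1, ..., a_{n-1}` mutually distinct, and consecutive vertices
semi-adjacent. -/
def IsSemicycle (D : DG) (l : List ℕ) : Prop :=
  4 ≤ l.length ∧ (∀ a ∈ l, a ∈ D.verts) ∧ l.head? = l.getLast? ∧
  l.dropLast.Nodup ∧ l.Chain' D.semiAdj

/-- `D` is weakly connected: every two vertices are joined by a semipath. -/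
def WeaklyConnected (D : DG) : Prop :=
  ∀ a ∈ D.verts, ∀ b ∈ D.verts,
    ∃ l, D.IsSemipath l ∧ l.head? = some a ∧ l.getLast? = some b

/-- `D` is asemicyclic: it has no semicycles. -/
def Asemicyclic (D : DG) : Prop := ∀ l, ¬ D.IsSemicycle l

/-- The cut `D_W[e_W - e_E]D_E`:
`(D_W - {e_W}) ∪ (D_E - {e_E}) ∪ {(e_W.1, e_E.2)}` on the union of the vertex
sets with `e_W.2` and `e_E.1` omitted. -/
def cut (DW DE : DG) (eW eE : ℕ × ℕ) : DG where
  verts := (DW.verts ∪ DE.verts) \ {eW.2, eE.1}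
  edges := insert (eW.1, eE.2) ((DW.edges.erase eW) ∪ (DE.edges.erase eE))

end DG

/-- The type of assignments of four distinguished edges `NW, SW, NE, SE`. -/
abbrev DistE : Type := YDir → XDir → ℕ × ℕ

/-- The type of labellings assigning to (inner) vertices four edges. -/
abbrev Lab : Type := ℕ → YDir → XDir → ℕ × ℕ

/-- `⟨D, ε⟩` is a basic K-graph: `D` is an oriented graph with a single inner
vertex `b`, all edges begin or end in `b`, every other vertex is joined to `b`
by an edge, there is at least one edge ending in `b` and one beginning in `b`,
the distinguished edges `ε Y W` end in `b` and `ε Y E` begin in `b`, and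
(XYB): if there are at least two `X`-edges then `NX ≠ SX`. -/
def IsBasicK (D : DG) (ε : DistE) : Prop :=
  D.IsOriented ∧
  ∃ b ∈ D.verts,
    (∀ e ∈ D.edges, e.1 = b ∨ e.2 = b) ∧
    (∀ v ∈ D.verts, v = b ∨ (v, b) ∈ D.edges ∨ (b, v) ∈ D.edges) ∧
    (∃ a, (a, b) ∈ D.edges) ∧ (∃ c, (b, c) ∈ D.edges) ∧
    (∀ Y : YDir, ε Y XDir.W ∈ D.edges ∧ (ε Y XDir.W).2 = b ∧
      ε Y XDir.E ∈ D.edges ∧ (ε Y XDir.E).1 = b) ∧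
    (2 ≤ (D.edges.filter (fun e => e.2 = b)).card →
      ε YDir.N XDir.W ≠ ε YDir.S XDir.W) ∧
    (2 ≤ (D.edges.filter (fun e => e.1 = b)).card →
      ε YDir.N XDir.E ≠ ε YDir.S XDir.E)

/-- `⟨D, ε⟩` is a basic Q-graph: as a basic K-graph but with no requirement
(XYB) on the distinguished edges. -/
def IsBasicQ (D : DG) (ε : DistE) : Prop :=
  D.IsOriented ∧
  ∃ b ∈ D.verts,
    (∀ e ∈ D.edges, e.1 = b ∨ e.2 = b) ∧
    (∀ v ∈ D.verts, v = b ∨ (v, b) ∈ D.edges ∨ (b, v) ∈ D.edges) ∧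
    (∃ a, (a, b) ∈ D.edges) ∧ (∃ c, (b, c) ∈ D.edges) ∧
    (∀ Y : YDir, ε Y XDir.W ∈ D.edges ∧ (ε Y XDir.W).2 = b ∧
      ε Y XDir.E ∈ D.edges ∧ (ε Y XDir.E).1 = b)

/-- Finite binary trees whose nodes carry an oriented graph, four
distinguished edges, and (at internal nodes) the two cut edges. -/
inductive CTree : Type
  | leaf (D : DG) (ε : DistE)
  | node (D : DG) (ε : DistE) (eW eE : ℕ × ℕ) (l r : CTree)

namespace CTree

/-- The graph at the root of the tree. -/
def rootGraph : CTree → DG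
  | .leaf D _ => D
  | .node D _ _ _ _ _ => D

/-- The distinguished edges at the root of the tree. -/
def dist : CTree → DistE
  | .leaf _ ε => ε
  | .node _ ε _ _ _ _ => ε

/-- The list of graphs-with-distinguished-edges at the leaves of the tree
(the basic K-graphs determining the leaves of a construction). -/
def leaves : CTree → List (DG × DistE)
  | .leaf D ε => [(D, ε)]
  | .node _ _ _ _ l r => l.leaves ++ r.leaves

end CTree

/-- The tree `G_W[e_W - e_E]G_E`, whose root graph is the cut of the root
graphs and whose distinguished edges are given by (XYD). -/
def mkNode (GW GE : CTree) (eW eE : ℕ × ℕ) : CTree :=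
  .node (DG.cut GW.rootGraph GE.rootGraph eW eE)
    (fun Y X =>
      match X with
      | .W => if eE = GE.dist Y XDir.W then GW.dist Y XDir.W else GE.dist Y XDir.W
      | .E => if eW = GW.dist Y XDir.E then GE.dist Y XDir.E else GW.dist Y XDir.E)
    eW eE GW GE

/-- The inductive notion of construction (of a global K-graph). -/
inductive IsConstruction : CTree → Prop
  | leaf (D : DG) (ε : DistE) (h : IsBasicK D ε) : IsConstruction (.leaf D ε)
  | node (D : DG) (ε : DistE) (eW eE : ℕ × ℕ) (GW GE : CTree)
      (hW : IsConstruction GW) (hE : IsConstruction GE)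
      (hdisj : Disjoint GW.rootGraph.verts GE.rootGraph.verts)
      (heW : GW.rootGraph.funcEEdge eW)
      (heE : GE.rootGraph.funcWEdge eE)
      (hD : D = DG.cut GW.rootGraph GE.rootGraph eW eE)
      (hXYC : ∀ Y : YDir, eW = GW.dist Y XDir.E ∨ eE = GE.dist Y XDir.W)
      (hεW : ∀ Y : YDir, ε Y XDir.W =
        if eE = GE.dist Y XDir.W then GW.dist Y XDir.W else GE.dist Y XDir.W)
      (hεE : ∀ Y : YDir, ε Y XDir.E =
        if eW = GW.dist Y XDir.E then GE.dist Y XDir.E else GW.dist Y XDir.E) :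
      IsConstruction (.node D ε eW eE GW GE)

/-- The inductive notion of construction of a global Q-graph: as
`IsConstruction` but with basic Q-graphs at the leaves. -/
inductive IsConstructionQ : CTree → Prop
  | leaf (D : DG) (ε : DistE) (h : IsBasicQ D ε) : IsConstructionQ (.leaf D ε)
  | node (D : DG) (ε : DistE) (eW eE : ℕ × ℕ) (GW GE : CTree)
      (hW : IsConstructionQ GW) (hE : IsConstructionQ GE)
      (hdisj : Disjoint GW.rootGraph.verts GE.rootGraph.verts)
      (heW : GW.rootGraph.funcEEdge eW)
      (heE : GE.rootGraph.funcWEdge eE)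
      (hD : D = DG.cut GW.rootGraph GE.rootGraph eW eE)
      (hXYC : ∀ Y : YDir, eW = GW.dist Y XDir.E ∨ eE = GE.dist Y XDir.W)
      (hεW : ∀ Y : YDir, ε Y XDir.W =
        if eE = GE.dist Y XDir.W then GW.dist Y XDir.W else GE.dist Y XDir.W)
      (hεE : ∀ Y : YDir, ε Y XDir.E =
        if eW = GW.dist Y XDir.E then GE.dist Y XDir.E else GW.dist Y XDir.E) :
      IsConstructionQ (.node D ε eW eE GW GE)

/-- ρ-equivalence of constructions: the least equivalence relation containing
ρ1, ρ2, ρ3 and closed under congruence with respect to cuts. -/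
inductive RhoEquiv : CTree → CTree → Prop
  | rho1 (P Q R : CTree) (eW eE fW fE : ℕ × ℕ)
      (hP : IsConstruction P) (hQ : IsConstruction Q) (hR : IsConstruction R)
      (heW : P.rootGraph.isEEdge eW) (hfW : Q.rootGraph.isEEdge fW)
      (heE : Q.rootGraph.isWEdge eE) (hfE : R.rootGraph.isWEdge fE)
      (h1 : IsConstruction (mkNode (mkNode P Q eW eE) R fW fE))
      (h2 : IsConstruction (mkNode P (mkNode Q R fW fE) eW eE)) :
      RhoEquiv (mkNode (mkNode P Q eW eE) R fW fE)
               (mkNode P (mkNode Q R fW fE) eW eE)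
  | rho2 (P Q R : CTree) (eW eE fW fE : ℕ × ℕ)
      (hP : IsConstruction P) (hQ : IsConstruction Q) (hR : IsConstruction R)
      (heW : P.rootGraph.isEEdge eW) (hfW : P.rootGraph.isEEdge fW)
      (hne : eW ≠ fW)
      (heE : Q.rootGraph.isWEdge eE) (hfE : R.rootGraph.isWEdge fE)
      (h1 : IsConstruction (mkNode (mkNode P Q eW eE) R fW fE))
      (h2 : IsConstruction (mkNode (mkNode P R fW fE) Q eW eE)) :
      RhoEquiv (mkNode (mkNode P Q eW eE) R fW fE)
               (mkNode (mkNode P R fW fE) Q eW eE)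
  | rho3 (P Q R : CTree) (eW eE fW fE : ℕ × ℕ)
      (hP : IsConstruction P) (hQ : IsConstruction Q) (hR : IsConstruction R)
      (heE : P.rootGraph.isWEdge eE) (hfE : P.rootGraph.isWEdge fE)
      (hne : eE ≠ fE)
      (heW : Q.rootGraph.isEEdge eW) (hfW : R.rootGraph.isEEdge fW)
      (h1 : IsConstruction (mkNode R (mkNode Q P eW eE) fW fE))
      (h2 : IsConstruction (mkNode Q (mkNode R P fW fE) eW eE)) :
      RhoEquiv (mkNode R (mkNode Q P eW eE) fW fE)
               (mkNode Q (mkNode R P fW fE) eW eE)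
  | congr (G1 G2 H1 H2 : CTree) (eW eE : ℕ × ℕ)
      (h12 : RhoEquiv G1 G2) (h34 : RhoEquiv H1 H2)
      (hc1 : IsConstruction (mkNode G1 H1 eW eE))
      (hc2 : IsConstruction (mkNode G2 H2 eW eE)) :
      RhoEquiv (mkNode G1 H1 eW eE) (mkNode G2 H2 eW eE)
  | refl (G : CTree) (h : IsConstruction G) : RhoEquiv G G
  | symm {G H : CTree} (h : RhoEquiv G H) : RhoEquiv H G
  | trans {G H K : CTree} (h1 : RhoEquiv G H) (h2 : RhoEquiv H K) :
      RhoEquiv G K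

/-- The class `[G]`: all constructions with the same root graph as `G` whose
leaves are determined by the same basic K-graphs as those of `G`. -/
def classOf (G : CTree) : Set CTree :=
  {H | IsConstruction H ∧ H.rootGraph = G.rootGraph ∧
    ∀ p : DG × DistE, p ∈ H.leaves ↔ p ∈ G.leaves}

/-- Renaming the vertices of a digraph along a function. -/
def DG.rename (f : ℕ → ℕ) (D : DG) : DG where
  verts := D.verts.image f
  edges := D.edges.image (fun e => (f e.1, f e.2))

/-- Renaming the vertices throughout a tree. -/
def CTree.rename (f : ℕ → ℕ) : CTree → CTree
  | .leaf D ε => .leaf (DG.rename f D) (fun Y X => (f (ε Y X).1, f (ε Y X).2))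
  | .node D ε eW eE l r =>
      .node (DG.rename f D) (fun Y X => (f (ε Y X).1, f (ε Y X).2))
        (f eW.1, f eW.2) (f eE.1, f eE.2) (l.rename f) (r.rename f)

/-- σ-equivalence: `H` is obtained from `G` by a bijective renaming of
vertices that fixes the root vertices (so only secondary vertices may be
renamed). -/
def SigmaEquiv (G H : CTree) : Prop :=
  ∃ f : ℕ ≃ ℕ, (∀ v ∈ G.rootGraph.verts, f v = v) ∧ H = G.rename f

/-- The global compass graph `‖G‖`: all constructions σ-equivalent to a
construction in `[G]`. -/
def normClass (G : CTree) : Set CTree :=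
  {H | ∃ K ∈ classOf G, SigmaEquiv K H}

/-- The labelling `L` of `λ(G) = ⟨D, L⟩`, defined by induction on `G`: at a
leaf given by a basic K-graph with inner vertex `b`, `YX(b) = YX(B)`; at a
node, the value is inherited from the appropriate subtree unless it is one of
the two cut edges, in which case it is the new edge introduced by the cut. -/
def lamG : CTree → Lab
  | .leaf _ ε => fun _ => ε
  | .node _ _ eW eE l r => fun a Y X =>
      let v := if a ∈ l.rootGraph.verts then lamG l a Y X else lamG r a Y X
      if v = eW ∨ v = eE then (eW.1, eE.2) else v

/-- `L` assigns to every inner vertex `a` edges `L a Y W` ending in `a` and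
edges `L a Y E` beginning in `a`. -/
def ProperLab (D : DG) (L : Lab) : Prop :=
  ∀ a, D.isInner a → ∀ Y : YDir,
    L a Y XDir.W ∈ D.edges ∧ (L a Y XDir.W).2 = a ∧
    L a Y XDir.E ∈ D.edges ∧ (L a Y XDir.E).1 = a

/-- `⟨D, L⟩` separates `N` from `S`. -/
def SeparatesNS (D : DG) (L : Lab) : Prop :=
  ∀ a, D.isInner a →
    (2 ≤ (D.edges.filter (fun e => e.2 = a)).card →
      L a YDir.N XDir.W ≠ L a YDir.S XDir.W) ∧
    (2 ≤ (D.edges.filter (fun e => e.1 = a)).card →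
      L a YDir.N XDir.E ≠ L a YDir.S XDir.E)

/-- A list `a_1, ..., a_n` is `Y`-decent in `⟨D, L⟩`: `n = 1`, or
`YE(a_1) = (a_1, a_2)`, or `YW(a_n) = (a_{n-1}, a_n)`. -/
def Ydecent (L : Lab) (Y : YDir) (l : List ℕ) : Prop :=
  ∀ a b t, l = a :: b :: t →
    (L a Y XDir.E = (a, b) ∨
      ∃ c d t', l.reverse = d :: c :: t' ∧ L d Y XDir.W = (c, d))

/-- `⟨D, L⟩` is a local compass graph. -/
def IsLocalCompass (D : DG) (L : Lab) : Prop :=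
  D.IsOriented ∧ ProperLab D L ∧
  D.WeaklyConnected ∧ D.Asemicyclic ∧ D.WEFunctional ∧ (∃ a, D.isInner a) ∧
  SeparatesNS D L ∧
  (∀ l, D.IsPath l → Ydecent L YDir.N l ∧ Ydecent L YDir.S l)

/-- A path (list) covers an edge `g` when `g` is a pair of consecutive
vertices of the list. -/
def covers (l : List ℕ) (g : ℕ × ℕ) : Prop := g ∈ l.zip l.tail

/-- A `YX`-edge in `⟨D, L⟩`. -/
def YXedge (D : DG) (L : Lab) (Y : YDir) : XDir → (ℕ × ℕ) → Prop
  | .W, g => g ∈ D.edges ∧ (L g.2 Y XDir.W = g ∨ D.isEEdge g)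
  | .E, g => g ∈ D.edges ∧ (L g.1 Y XDir.E = g ∨ D.isWEdge g)

/-- A proper semipath: a semipath such that neither it nor its reverse is a
path. -/
def ProperSemipath (D : DG) (l : List ℕ) : Prop :=
  D.IsSemipath l ∧ ¬ D.IsPath l ∧ ¬ D.IsPath l.reverse

/-- A transversal edge `(a,b)`: there is a proper semipath beginning with
`a, b` and a proper semipath beginning with `b, a`. -/
def Transversal (D : DG) (e : ℕ × ℕ) : Prop :=
  e ∈ D.edges ∧
  (∃ t, ProperSemipath D (e.1 :: e.2 :: t)) ∧
  (∃ t, ProperSemipath D (e.2 :: e.1 :: t))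

/-- The edge of `D` that connects two semi-adjacent vertices `a` and `b`. -/
def connEdge (D : DG) (a b : ℕ) : ℕ × ℕ :=
  if (a, b) ∈ D.edges then (a, b) else (b, a)

/-- The connecting edges of a list: the edges connecting its consecutive
vertices. -/
def connEdges (D : DG) (l : List ℕ) (e : ℕ × ℕ) : Prop :=
  ∃ p ∈ l.zip l.tail, e = connEdge D p.1 p.2

/-- A bifurcation: three distinct edges with a common vertex. -/
def Bifurcation (D : DG) (e1 e2 e3 : ℕ × ℕ) : Prop :=
  e1 ∈ D.edges ∧ e2 ∈ D.edges ∧ e3 ∈ D.edges ∧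
  e1 ≠ e2 ∧ e1 ≠ e3 ∧ e2 ≠ e3 ∧
  ∃ v, (v = e1.1 ∨ v = e1.2) ∧ (v = e2.1 ∨ v = e2.2) ∧ (v = e3.1 ∨ v = e3.2)

/-- A K-graph: a weakly connected, asemicyclic, `W`-`E`-functional oriented
graph with an inner vertex in which no bifurcation is transversal. -/
def IsKGraph (D : DG) : Prop :=
  D.IsOriented ∧ D.WeaklyConnected ∧ D.Asemicyclic ∧ D.WEFunctional ∧
  (∃ a, D.isInner a) ∧
  ∀ e1 e2 e3, Bifurcation D e1 e2 e3 →
    ¬ (Transversal D e1 ∧ Transversal D e2 ∧ Transversal D e3)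

/-- A Q-graph: a weakly connected, asemicyclic, `W`-`E`-functional oriented
graph with an inner vertex. -/
def IsQGraph (D : DG) : Prop :=
  D.IsOriented ∧ D.WeaklyConnected ∧ D.Asemicyclic ∧ D.WEFunctional ∧
  ∃ a, D.isInner a

/-! ### Auxiliary lemmas about `covers` -/

section Covers

lemma covers_nil (g : ℕ × ℕ) : ¬ covers [] g := by simp [covers]

lemma covers_single (x : ℕ) (g : ℕ × ℕ) : ¬ covers [x] g := by simp [covers]

lemma covers_cons₂ {x y : ℕ} {t : List ℕ} {g : ℕ × ℕ} :
    covers (x :: y :: t) g ↔ g = (x, y) ∨ covers (y :: t) g := by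
  simp [covers]

lemma covers_of_covers_tail {x : ℕ} {l : List ℕ} {g : ℕ × ℕ}
    (h : covers l g) : covers (x :: l) g := by
  cases l with
  | nil => exact absurd h (covers_nil g)
  | cons y t => exact covers_cons₂.mpr (Or.inr h)

lemma covers_head₂ (x y : ℕ) (t : List ℕ) : covers (x :: y :: t) (x, y) :=
  covers_cons₂.mpr (Or.inl rfl)

lemma covers_append_left {l1 l2 : List ℕ} {g : ℕ × ℕ}
    (h : covers l1 g) : covers (l1 ++ l2) g := by
  induction l1 with
  | nil => exact absurd h (covers_nil g)
  | cons x t ih =>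
    cases t with
    | nil => exact absurd h (covers_single x g)
    | cons y s =>
      rcases covers_cons₂.mp h with h | h
      · subst h; exact covers_head₂ _ _ _
      · exact covers_of_covers_tail (ih h)

lemma covers_append_right {l1 l2 : List ℕ} {g : ℕ × ℕ}
    (h : covers l2 g) : covers (l1 ++ l2) g := by
  induction l1 with
  | nil => exact h
  | cons x t ih => exact covers_of_covers_tail ih

lemma covers_append_junction {l1 l2 : List ℕ} {x y : ℕ}
    (h1 : l1.getLast? = some x) (h2 : l2.head? = some y) :
    covers (l1 ++ l2) (x, y) := by
  induction l1 with
  | nil => simp at h1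
  | cons z t ih =>
    cases t with
    | nil =>
      simp at h1; subst h1
      cases l2 with
      | nil => simp at h2
      | cons w s => simp at h2; subst h2; exact covers_head₂ _ _ _
    | cons w s =>
      rw [List.getLast?_cons_cons] at h1
      exact covers_of_covers_tail (ih h1)

lemma covers_append_cases {l1 l2 : List ℕ} {g : ℕ × ℕ}
    (h : covers (l1 ++ l2) g) :
    covers l1 g ∨ covers l2 g ∨
      (l1.getLast? = some g.1 ∧ l2.head? = some g.2) := by
  induction l1 with
  | nil => exact Or.inr (Or.inl h)
  | cons z t ih =>
    cases t with
    | nil =>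
      cases l2 with
      | nil => exact Or.inl h
      | cons w s =>
        rcases covers_cons₂.mp h with h | h
        · right; right; subst h; simp
        · exact Or.inr (Or.inl h)
    | cons w s =>
      rcases covers_cons₂.mp h with h | h
      · subst h; exact Or.inl (covers_head₂ _ _ _)
      · rcases ih h with h' | h' | h'
        · exact Or.inl (covers_of_covers_tail h')
        · exact Or.inr (Or.inl h')
        · exact Or.inr (Or.inr ⟨by rw [List.getLast?_cons_cons]; exact h'.1, h'.2⟩)

lemma covers_mem {l : List ℕ} {g : ℕ × ℕ} (h : covers l g) :
    g.1 ∈ l ∧ g.2 ∈ l := by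
  have := List.of_mem_zip h
  exact ⟨this.1, List.mem_of_mem_tail this.2⟩

lemma covers_mem_tail {l : List ℕ} {g : ℕ × ℕ} (h : covers l g) :
    g.2 ∈ l.tail := (List.of_mem_zip h).2

lemma covers_iff_append {l : List ℕ} {g : ℕ × ℕ} :
    covers l g ↔ ∃ u v, l = u ++ g.1 :: g.2 :: v := by
  constructor
  · intro h
    induction l with
    | nil => exact absurd h (covers_nil g)
    | cons x t ih =>
      cases t with
      | nil => exact absurd h (covers_single x g)
      | cons y s =>
        rcases covers_cons₂.mp h with h | h
        · subst h; exact ⟨[], s, rfl⟩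
        · obtain ⟨u, v, huv⟩ := ih h
          exact ⟨x :: u, v, by rw [huv]; rfl⟩
  · rintro ⟨u, v, rfl⟩
    exact covers_append_right (covers_head₂ _ _ _)

lemma covers_reverse {l : List ℕ} {g : ℕ × ℕ} (h : covers l g) :
    covers l.reverse (g.2, g.1) := by
  obtain ⟨u, v, rfl⟩ := covers_iff_append.mp h
  refine covers_iff_append.mpr ⟨v.reverse, u.reverse, ?_⟩
  simp

lemma covers_first {S : ℕ × ℕ → Prop} {l : List ℕ} {h : ℕ × ℕ}
    (hall : ∀ g, covers l g → S g) (hc : covers l h)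
    (hw : ∀ u, ¬ S (u, h.1)) : ∃ t, l = h.1 :: h.2 :: t := by
  induction l with
  | nil => exact absurd hc (covers_nil h)
  | cons x t ih =>
    cases t with
    | nil => exact absurd hc (covers_single x h)
    | cons y s =>
      rcases covers_cons₂.mp hc with hc | hc
      · rw [hc]; exact ⟨s, rfl⟩
      · obtain ⟨t', ht'⟩ := ih (fun g hg => hall g (covers_of_covers_tail hg)) hc
        exfalso
        apply hw x
        have : covers (x :: y :: s) (x, h.1) := by
          rw [ht']; exact covers_head₂ _ _ _
        exact hall _ this

lemma covers_last {S : ℕ × ℕ → Prop} {l : List ℕ} {h : ℕ × ℕ}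
    (hall : ∀ g, covers l g → S g) (hc : covers l h)
    (he : ∀ u, ¬ S (h.2, u)) : ∃ t, l.reverse = h.2 :: h.1 :: t := by
  refine covers_first (S := fun g => S (g.2, g.1)) ?_ (covers_reverse hc) ?_
  · intro g hg
    have := covers_reverse hg
    rw [List.reverse_reverse] at this
    exact hall _ this
  · intro u hu
    exact he u hu

lemma chain'_iff_covers {R : ℕ → ℕ → Prop} {l : List ℕ} :
    l.Chain' R ↔ ∀ g, covers l g → R g.1 g.2 := by
  induction l with
  | nil => simp [covers, List.Chain', List.isChain_nil]
  | cons x t ih =>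
    cases t with
    | nil => simp [covers, List.Chain', List.isChain_singleton]
    | cons y s =>
      rw [List.Chain', List.isChain_cons_cons, ← List.Chain', ih]
      constructor
      · rintro ⟨hxy, hrest⟩ g hg
        rcases covers_cons₂.mp hg with hg | hg
        · subst hg; exact hxy
        · exact hrest g hg
      · intro hh
        exact ⟨hh (x, y) (covers_head₂ _ _ _),
          fun g hg => hh g (covers_of_covers_tail hg)⟩

lemma covers_inj_fst {l : List ℕ} {g g' : ℕ × ℕ} (hn : l.Nodup)
    (h : covers l g) (h' : covers l g') (e : g.1 = g'.1) : g = g' := by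
  induction l with
  | nil => exact absurd h (covers_nil g)
  | cons x t ih =>
    cases t with
    | nil => exact absurd h (covers_single x g)
    | cons y s =>
      rcases covers_cons₂.mp h with h1 | h1 <;>
        rcases covers_cons₂.mp h' with h2 | h2
      · rw [h1, h2]
      · exfalso
        have : g'.1 ∈ y :: s := (covers_mem h2).1
        rw [← e, h1] at this
        exact (List.nodup_cons.mp hn).1 this
      · exfalso
        have : g.1 ∈ y :: s := (covers_mem h1).1
        rw [e, h2] at this
        exact (List.nodup_cons.mp hn).1 this
      · exact ih (List.nodup_cons.mp hn).2 h1 h2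

lemma covers_inj_snd {l : List ℕ} {g g' : ℕ × ℕ} (hn : l.Nodup)
    (h : covers l g) (h' : covers l g') (e : g.2 = g'.2) : g = g' := by
  induction l with
  | nil => exact absurd h (covers_nil g)
  | cons x t ih =>
    cases t with
    | nil => exact absurd h (covers_single x g)
    | cons y s =>
      rcases covers_cons₂.mp h with h1 | h1 <;>
        rcases covers_cons₂.mp h' with h2 | h2
      · rw [h1, h2]
      · exfalso
        have : g'.2 ∈ s := covers_mem_tail h2
        rw [← e, h1] at this
        exact (List.nodup_cons.mp (List.nodup_cons.mp hn).2).1 this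
      · exfalso
        have : g.2 ∈ s := covers_mem_tail h1
        rw [e, h2] at this
        exact (List.nodup_cons.mp (List.nodup_cons.mp hn).2).1 this
      · exact ih (List.nodup_cons.mp hn).2 h1 h2

lemma mem_last_of_no_succ {S : ℕ × ℕ → Prop} {l : List ℕ} {v : ℕ}
    (hall : ∀ g, covers l g → S g) (hv : v ∈ l)
    (hns : ∀ u, ¬ S (v, u)) : l.getLast? = some v := by
  induction l with
  | nil => simp at hv
  | cons x t ih =>
    rcases List.mem_cons.mp hv with rfl | hv
    · cases t with
      | nil => rfl
      | cons y s => exact absurd (hall (v, y) (covers_head₂ _ _ _)) (hns y)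
    · have hne : t ≠ [] := List.ne_nil_of_mem hv
      obtain ⟨y, s, rfl⟩ := List.exists_cons_of_ne_nil hne
      rw [List.getLast?_cons_cons]
      exact ih (fun g hg => hall g (covers_of_covers_tail hg)) hv

lemma mem_head_of_no_pred {S : ℕ × ℕ → Prop} {l : List ℕ} {v : ℕ}
    (hall : ∀ g, covers l g → S g) (hv : v ∈ l)
    (hnp : ∀ u, ¬ S (u, v)) : l.head? = some v := by
  induction l with
  | nil => simp at hv
  | cons x t ih =>
    rcases List.mem_cons.mp hv with rfl | hv
    · rfl
    · exfalso
      have := ih (fun g hg => hall g (covers_of_covers_tail hg)) hv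
      cases t with
      | nil => simp at hv
      | cons y s =>
        simp at this
        exact hnp x (hall (x, v) (this ▸ covers_head₂ x y s))
end Covers
set_option linter.unusedSectionVars false

/-! ### Lemmas about the cut graph -/

section CutLemmas

variable {DW DE : DG} {eW eE : ℕ × ℕ}

lemma cut_edges_mem {g : ℕ × ℕ} :
    g ∈ (DG.cut DW DE eW eE).edges ↔
      g = (eW.1, eE.2) ∨ (g ∈ DW.edges ∧ g ≠ eW) ∨ (g ∈ DE.edges ∧ g ≠ eE) := by
  simp only [DG.cut, Finset.mem_insert, Finset.mem_union, Finset.mem_erase]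
  tauto

lemma cut_verts_mem {v : ℕ} :
    v ∈ (DG.cut DW DE eW eE).verts ↔
      (v ∈ DW.verts ∨ v ∈ DE.verts) ∧ v ≠ eW.2 ∧ v ≠ eE.1 := by
  simp only [DG.cut, Finset.mem_sdiff, Finset.mem_union, Finset.mem_insert,
    Finset.mem_singleton]
  tauto

section Ctx

variable (hoW : DW.IsOriented) (hoE : DE.IsOriented)
  (hdisj : Disjoint DW.verts DE.verts)
  (heW : DW.funcEEdge eW) (heE : DE.funcWEdge eE)

include heW in
lemma ctx_eW_mem : eW ∈ DW.edges := heW.1.1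
include heE in
lemma ctx_eE_mem : eE ∈ DE.edges := heE.1.1

include hoW heW in
lemma ctx_a_mem : eW.1 ∈ DW.verts := (hoW.1 _ heW.1.1).1
include hoW heW in
lemma ctx_b_mem : eW.2 ∈ DW.verts := (hoW.1 _ heW.1.1).2
include hoE heE in
lemma ctx_c_mem : eE.1 ∈ DE.verts := (hoE.1 _ heE.1.1).1
include hoE heE in
lemma ctx_d_mem : eE.2 ∈ DE.verts := (hoE.1 _ heE.1.1).2
include hoW heW in
lemma ctx_ab_ne : eW.1 ≠ eW.2 := hoW.2.1 _ heW.1.1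
include hoE heE in
lemma ctx_cd_ne : eE.1 ≠ eE.2 := hoE.2.1 _ heE.1.1

include hdisj in
lemma ctx_notE {v : ℕ} (hv : v ∈ DW.verts) : v ∉ DE.verts :=
  fun hv' => Finset.disjoint_left.mp hdisj hv hv'

include hdisj in
lemma ctx_notW {v : ℕ} (hv : v ∈ DE.verts) : v ∉ DW.verts :=
  fun hv' => Finset.disjoint_left.mp hdisj hv' hv

include heW in
lemma Wside_edge {g : ℕ × ℕ} (hg : g ∈ DW.edges) (hne : g ≠ eW) :
    g.1 ≠ eW.2 ∧ g.2 ≠ eW.2 := by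
  constructor
  · intro hb
    exact heW.1.2.2 g.2 (by rw [← hb]; exact hg)
  · intro hb
    apply hne
    have := heW.2 g.1 (by rw [← hb]; exact hg)
    exact Prod.ext this hb

include heE in
lemma Eside_edge {g : ℕ × ℕ} (hg : g ∈ DE.edges) (hne : g ≠ eE) :
    g.1 ≠ eE.1 ∧ g.2 ≠ eE.1 := by
  constructor
  · intro hc
    apply hne
    have := heE.2 g.2 (by rw [← hc]; exact hg)
    exact Prod.ext hc this
  · intro hc
    exact heE.1.2.2 g.1 (by rw [← hc]; exact hg)

lemma memD_of_W {g : ℕ × ℕ} (hg : g ∈ DW.edges) (hne : g ≠ eW) :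
    g ∈ (DG.cut DW DE eW eE).edges := cut_edges_mem.mpr (Or.inr (Or.inl ⟨hg, hne⟩))

lemma memD_of_E {g : ℕ × ℕ} (hg : g ∈ DE.edges) (hne : g ≠ eE) :
    g ∈ (DG.cut DW DE eW eE).edges := cut_edges_mem.mpr (Or.inr (Or.inr ⟨hg, hne⟩))

lemma memD_new : (eW.1, eE.2) ∈ (DG.cut DW DE eW eE).edges :=
  cut_edges_mem.mpr (Or.inl rfl)

include hdisj hoE heE in
lemma vW_memD {v : ℕ} (hv : v ∈ DW.verts) (hne : v ≠ eW.2) :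
    v ∈ (DG.cut DW DE eW eE).verts :=
  cut_verts_mem.mpr ⟨Or.inl hv, hne,
    fun hc => ctx_notE hdisj hv (by rw [hc]; exact ctx_c_mem hoE heE)⟩

include hdisj hoW heW in
lemma vE_memD {v : ℕ} (hv : v ∈ DE.verts) (hne : v ≠ eE.1) :
    v ∈ (DG.cut DW DE eW eE).verts :=
  cut_verts_mem.mpr ⟨Or.inr hv, fun hb => ctx_notW hdisj hv (by rw [hb]; exact ctx_b_mem hoW heW), hne⟩

include hoE hoW hdisj heE in
lemma inW_of_snd {g : ℕ × ℕ} (hg : g ∈ (DG.cut DW DE eW eE).edges)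
    (hv : g.2 ∈ DW.verts) : g ∈ DW.edges ∧ g ≠ eW := by
  rcases cut_edges_mem.mp hg with h | h | h
  · exfalso
    have : g.2 = eE.2 := by rw [h]
    exact ctx_notE hdisj hv (by rw [this]; exact ctx_d_mem hoE heE)
  · exact h
  · exact absurd (hoE.1 _ h.1).2 (ctx_notE hdisj hv)

include hoW hdisj heW in
lemma inE_of_fst {g : ℕ × ℕ} (hg : g ∈ (DG.cut DW DE eW eE).edges)
    (hv : g.1 ∈ DE.verts) : g ∈ DE.edges ∧ g ≠ eE := by
  rcases cut_edges_mem.mp hg with h | h | h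
  · exfalso
    have : g.1 = eW.1 := by rw [h]
    exact ctx_notW hdisj hv (by rw [this]; exact ctx_a_mem hoW heW)
  · exact absurd (hoW.1 _ h.1).1 (ctx_notW hdisj hv)
  · exact h

include hoE hoW hdisj heE in
lemma inWnew_of_fst {g : ℕ × ℕ} (hg : g ∈ (DG.cut DW DE eW eE).edges)
    (hv : g.1 ∈ DW.verts) : g = (eW.1, eE.2) ∨ (g ∈ DW.edges ∧ g ≠ eW) := by
  rcases cut_edges_mem.mp hg with h | h | h
  · exact Or.inl h
  · exact Or.inr h
  · exact absurd (hoE.1 _ h.1).1 (ctx_notE hdisj hv)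

include hoE hoW hdisj heW in
lemma inEnew_of_snd {g : ℕ × ℕ} (hg : g ∈ (DG.cut DW DE eW eE).edges)
    (hv : g.2 ∈ DE.verts) : g = (eW.1, eE.2) ∨ (g ∈ DE.edges ∧ g ≠ eE) := by
  rcases cut_edges_mem.mp hg with h | h | h
  · exact Or.inl h
  · exact absurd (hoW.1 _ h.1).2 (ctx_notW hdisj hv)
  · exact Or.inr h

include hoW hoE hdisj heW heE in
lemma cut_oriented : (DG.cut DW DE eW eE).IsOriented := by
  refine ⟨?_, ?_, ?_, ?_⟩
  · intro g hg
    rcases cut_edges_mem.mp hg with h | h | h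
    · have h1 : g.1 = eW.1 := by rw [h]
      have h2 : g.2 = eE.2 := by rw [h]
      rw [h1, h2]
      exact ⟨vW_memD hoE hdisj heE (ctx_a_mem hoW heW) (ctx_ab_ne hoW heW),
        vE_memD hoW hdisj heW (ctx_d_mem hoE heE) (Ne.symm (ctx_cd_ne hoE heE))⟩
    · have h1 := hoW.1 _ h.1
      have h2 := Wside_edge heW h.1 h.2
      exact ⟨vW_memD hoE hdisj heE h1.1 h2.1, vW_memD hoE hdisj heE h1.2 h2.2⟩
    · have h1 := hoE.1 _ h.1
      have h2 := Eside_edge heE h.1 h.2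
      exact ⟨vE_memD hoW hdisj heW h1.1 h2.1, vE_memD hoW hdisj heW h1.2 h2.2⟩
  · intro g hg
    rcases cut_edges_mem.mp hg with h | h | h
    · have h1 : g.1 = eW.1 := by rw [h]
      have h2 : g.2 = eE.2 := by rw [h]
      rw [h1, h2]
      intro hc
      have hm : eW.1 ∈ DE.verts := by rw [hc]; exact ctx_d_mem hoE heE
      exact ctx_notE hdisj (ctx_a_mem hoW heW) hm
    · exact hoW.2.1 _ h.1
    · exact hoE.2.1 _ h.1
  · intro x y hxy hyx
    rcases cut_edges_mem.mp hxy with h | h | h <;>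
      rcases cut_edges_mem.mp hyx with h' | h' | h'
    · have hx : x = eW.1 := congrArg Prod.fst h
      have hy' : x = eE.2 := congrArg Prod.snd h'
      have h1 : x ∈ DW.verts := by rw [hx]; exact ctx_a_mem hoW heW
      have h2 : x ∈ DE.verts := by rw [hy']; exact ctx_d_mem hoE heE
      exact ctx_notE hdisj h1 h2
    · have hy : y = eE.2 := congrArg Prod.snd h
      have h1 : y ∈ DW.verts := (hoW.1 _ h'.1).1
      have h2 : y ∈ DE.verts := by rw [hy]; exact ctx_d_mem hoE heE
      exact ctx_notE hdisj h1 h2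
    · have hx : x = eW.1 := congrArg Prod.fst h
      have h1 : x ∈ DW.verts := by rw [hx]; exact ctx_a_mem hoW heW
      have h2 : x ∈ DE.verts := (hoE.1 _ h'.1).2
      exact ctx_notE hdisj h1 h2
    · have hy' : x = eE.2 := congrArg Prod.snd h'
      have h1 : x ∈ DW.verts := (hoW.1 _ h.1).1
      have h2 : x ∈ DE.verts := by rw [hy']; exact ctx_d_mem hoE heE
      exact ctx_notE hdisj h1 h2
    · exact hoW.2.2.1 x y h.1 h'.1
    · exact ctx_notE hdisj (hoW.1 _ h.1).1 (hoE.1 _ h'.1).2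
    · have hx' : y = eW.1 := congrArg Prod.fst h'
      have h1 : y ∈ DW.verts := by rw [hx']; exact ctx_a_mem hoW heW
      have h2 : y ∈ DE.verts := (hoE.1 _ h.1).2
      exact ctx_notE hdisj h1 h2
    · exact ctx_notE hdisj (hoW.1 _ h'.1).1 (hoE.1 _ h.1).2
    · exact hoE.2.2.1 x y h.1 h'.1
  · exact ⟨eW.1, vW_memD hoE hdisj heE (ctx_a_mem hoW heW) (ctx_ab_ne hoW heW)⟩

end Ctx

end CutLemmas
section CtxTransfer

variable {DW DE : DG} {eW eE : ℕ × ℕ}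
variable (hoW : DW.IsOriented) (hoE : DE.IsOriented)
  (hdisj : Disjoint DW.verts DE.verts)
  (heW : DW.funcEEdge eW) (heE : DE.funcWEdge eE)

include hoW hoE hdisj heW heE in
lemma tW_W {v : ℕ} (hv : v ∈ DW.verts) (hne : v ≠ eW.2) :
    (DG.cut DW DE eW eE).isWVert v ↔ DW.isWVert v := by
  constructor
  · intro h
    refine ⟨hv, fun u hu => h.2 u (memD_of_W hu ?_)⟩
    intro hq; apply hne; rw [← hq]
  · intro h
    refine ⟨vW_memD hoE hdisj heE hv hne, fun u hu => ?_⟩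
    exact h.2 u (inW_of_snd hoW hoE hdisj heE hu hv).1

include hoW hoE hdisj heW heE in
lemma tE_E {v : ℕ} (hv : v ∈ DE.verts) (hne : v ≠ eE.1) :
    (DG.cut DW DE eW eE).isEVert v ↔ DE.isEVert v := by
  constructor
  · intro h
    refine ⟨hv, fun u hu => h.2 u (memD_of_E hu ?_)⟩
    intro hq; apply hne; rw [← hq]
  · intro h
    refine ⟨vE_memD hoW hdisj heW hv hne, fun u hu => ?_⟩
    exact h.2 u (inE_of_fst hoW hdisj heW hu hv).1

include hoW hoE hdisj heW heE in
lemma tE_W {v : ℕ} (hv : v ∈ DW.verts) (hne : v ≠ eW.2) :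
    (DG.cut DW DE eW eE).isEVert v ↔ DW.isEVert v := by
  by_cases hva : v = eW.1
  · subst hva
    constructor
    · intro h; exact absurd memD_new (h.2 eE.2)
    · intro h; exact absurd heW.1.1 ((Prod.mk.eta (p := eW)) ▸ h.2 eW.2)
  · constructor
    · intro h
      refine ⟨hv, fun u hu => h.2 u (memD_of_W hu ?_)⟩
      intro hq; apply hva; rw [← hq]
    · intro h
      refine ⟨vW_memD hoE hdisj heE hv hne, fun u hu => ?_⟩
      rcases inWnew_of_fst hoW hoE hdisj heE hu hv with hn | hn
      · exact hva (congrArg Prod.fst hn)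
      · exact h.2 u hn.1

include hoW hoE hdisj heW heE in
lemma tW_E {v : ℕ} (hv : v ∈ DE.verts) (hne : v ≠ eE.1) :
    (DG.cut DW DE eW eE).isWVert v ↔ DE.isWVert v := by
  by_cases hvd : v = eE.2
  · subst hvd
    constructor
    · intro h; exact absurd memD_new (h.2 eW.1)
    · intro h; exact absurd heE.1.1 ((Prod.mk.eta (p := eE)) ▸ h.2 eE.1)
  · constructor
    · intro h
      refine ⟨hv, fun u hu => h.2 u (memD_of_E hu ?_)⟩
      intro hq; apply hvd; rw [← hq]
    · intro h
      refine ⟨vE_memD hoW hdisj heW hv hne, fun u hu => ?_⟩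
      rcases inEnew_of_snd hoW hoE hdisj heW hu hv with hn | hn
      · exact hvd (congrArg Prod.snd hn)
      · exact h.2 u hn.1

include hoW hoE hdisj heW heE in
lemma innW {v : ℕ} (hv : v ∈ DW.verts) (hne : v ≠ eW.2) :
    (DG.cut DW DE eW eE).isInner v ↔ DW.isInner v := by
  constructor
  · rintro ⟨hm, ⟨u, hu⟩, ⟨w, hw⟩⟩
    refine ⟨hv, ⟨u, (inW_of_snd hoW hoE hdisj heE hu hv).1⟩, ?_⟩
    rcases inWnew_of_fst hoW hoE hdisj heE hw hv with hn | hn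
    · have : v = eW.1 := congrArg Prod.fst hn
      exact ⟨eW.2, by rw [this]; exact (Prod.mk.eta (p := eW)).symm ▸ heW.1.1⟩
    · exact ⟨w, hn.1⟩
  · rintro ⟨hm, ⟨u, hu⟩, ⟨w, hw⟩⟩
    refine ⟨vW_memD hoE hdisj heE hv hne, ⟨u, memD_of_W hu ?_⟩, ?_⟩
    · intro hq; apply hne; rw [← hq]
    · by_cases hva : v = eW.1
      · exact ⟨eE.2, by rw [hva]; exact memD_new⟩
      · refine ⟨w, memD_of_W hw ?_⟩
        intro hq; apply hva; rw [← hq]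

include hoW hoE hdisj heW heE in
lemma innE {v : ℕ} (hv : v ∈ DE.verts) (hne : v ≠ eE.1) :
    (DG.cut DW DE eW eE).isInner v ↔ DE.isInner v := by
  constructor
  · rintro ⟨hm, ⟨u, hu⟩, ⟨w, hw⟩⟩
    refine ⟨hv, ?_, ⟨w, (inE_of_fst hoW hdisj heW hw hv).1⟩⟩
    rcases inEnew_of_snd hoW hoE hdisj heW hu hv with hn | hn
    · have : v = eE.2 := congrArg Prod.snd hn
      exact ⟨eE.1, by rw [this]; exact (Prod.mk.eta (p := eE)).symm ▸ heE.1.1⟩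
    · exact ⟨u, hn.1⟩
  · rintro ⟨hm, ⟨u, hu⟩, ⟨w, hw⟩⟩
    refine ⟨vE_memD hoW hdisj heW hv hne, ?_, ⟨w, memD_of_E hw ?_⟩⟩
    · by_cases hvd : v = eE.2
      · exact ⟨eW.1, by rw [hvd]; exact memD_new⟩
      · refine ⟨u, memD_of_E hu ?_⟩
        intro hq; apply hvd; rw [← hq]
    · intro hq; apply hne; rw [← hq]

include hoW heW in
lemma innerA (hnbW : ∀ g, DW.isWEdge g → ¬ DW.isEEdge g) : DW.isInner eW.1 := by
  refine ⟨ctx_a_mem hoW heW, ?_, ⟨eW.2, (Prod.mk.eta (p := eW)).symm ▸ heW.1.1⟩⟩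
  by_contra hno
  push_neg at hno
  exact hnbW eW ⟨heW.1.1, ctx_a_mem hoW heW, hno⟩ heW.1
include hoE heE in
lemma innerD (hnbE : ∀ g, DE.isWEdge g → ¬ DE.isEEdge g) : DE.isInner eE.2 := by
  refine ⟨ctx_d_mem hoE heE, ⟨eE.1, (Prod.mk.eta (p := eE)).symm ▸ heE.1.1⟩, ?_⟩
  by_contra hno
  push_neg at hno
  exact hnbE eE heE.1 ⟨heE.1.1, ctx_d_mem hoE heE, hno⟩

include hoW hoE hdisj heW heE in
lemma pathD_of_W {l : List ℕ} (hl : DW.IsPath l) (hb : eW.2 ∉ l) :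
    (DG.cut DW DE eW eE).IsPath l := by
  refine ⟨hl.1, fun v hv => vW_memD hoE hdisj heE (hl.2.1 v hv)
    (fun hq => hb (hq ▸ hv)), hl.2.2.1, chain'_iff_covers.mpr ?_⟩
  intro g hg
  refine memD_of_W (chain'_iff_covers.mp hl.2.2.2 g hg) ?_
  intro hq
  exact hb (by rw [← hq]; exact (covers_mem hg).2)

include hoW hoE hdisj heW heE in
lemma pathD_of_E {l : List ℕ} (hl : DE.IsPath l) (hc : eE.1 ∉ l) :
    (DG.cut DW DE eW eE).IsPath l := by
  refine ⟨hl.1, fun v hv => vE_memD hoW hdisj heW (hl.2.1 v hv)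
    (fun hq => hc (hq ▸ hv)), hl.2.2.1, chain'_iff_covers.mpr ?_⟩
  intro g hg
  refine memD_of_E (chain'_iff_covers.mp hl.2.2.2 g hg) ?_
  intro hq
  exact hc (by rw [← hq]; exact (covers_mem hg).1)

include hoW hoE hdisj heW heE in
lemma pathW_of_D {l : List ℕ} (hl : (DG.cut DW DE eW eE).IsPath l)
    (hv : ∀ v ∈ l, v ∈ DW.verts) :
    DW.IsPath l ∧ ∀ g, covers l g → g ∈ DW.edges ∧ g ≠ eW := by
  have hcov : ∀ g, covers l g → g ∈ DW.edges ∧ g ≠ eW := by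
    intro g hg
    exact inW_of_snd hoW hoE hdisj heE (chain'_iff_covers.mp hl.2.2.2 g hg)
      (hv _ (covers_mem hg).2)
  exact ⟨⟨hl.1, hv, hl.2.2.1, chain'_iff_covers.mpr fun g hg => (hcov g hg).1⟩, hcov⟩

include hoW hoE hdisj heW heE in
lemma pathE_of_D {l : List ℕ} (hl : (DG.cut DW DE eW eE).IsPath l)
    (hv : ∀ v ∈ l, v ∈ DE.verts) :
    DE.IsPath l ∧ ∀ g, covers l g → g ∈ DE.edges ∧ g ≠ eE := by
  have hcov : ∀ g, covers l g → g ∈ DE.edges ∧ g ≠ eE := by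
    intro g hg
    exact inE_of_fst hoW hdisj heW (chain'_iff_covers.mp hl.2.2.2 g hg)
      (hv _ (covers_mem hg).1)
  exact ⟨⟨hl.1, hv, hl.2.2.1, chain'_iff_covers.mpr fun g hg => (hcov g hg).1⟩, hcov⟩

include hoW hoE hdisj heW heE in
lemma absorbE {l : List ℕ} {x : ℕ}
    (he : ∀ g, covers l g → g ∈ (DG.cut DW DE eW eE).edges)
    (hx : l.head? = some x) (hxE : x ∈ DE.verts) : ∀ v ∈ l, v ∈ DE.verts := by
  induction l generalizing x with
  | nil => simp at hx
  | cons z t ih =>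
    have hz : z = x := by simpa using hx
    subst hz
    intro v hvv
    rcases List.mem_cons.mp hvv with rfl | hvv
    · exact hxE
    · cases t with
      | nil => simp at hvv
      | cons y s =>
        have hedge := he (z, y) (covers_head₂ _ _ _)
        have hy : y ∈ DE.verts :=
          (hoE.1 _ (inE_of_fst hoW hdisj heW hedge hxE).1).2
        exact ih (fun g hg => he g (covers_of_covers_tail hg)) rfl hy v hvv

include hoW hoE hdisj heW heE in
lemma path_split {l : List ℕ}
    (hv : ∀ v ∈ l, v ∈ (DG.cut DW DE eW eE).verts)
    (he : ∀ g, covers l g → g ∈ (DG.cut DW DE eW eE).edges) :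
    ∃ l1 l2, l = l1 ++ l2 ∧ (∀ v ∈ l1, v ∈ DW.verts) ∧
      (∀ v ∈ l2, v ∈ DE.verts) ∧
      (l1 = [] ∨ l2 = [] ∨ (l1.getLast? = some eW.1 ∧ l2.head? = some eE.2)) := by
  induction l with
  | nil => exact ⟨[], [], rfl, by simp, by simp, Or.inl rfl⟩
  | cons x t ih =>
    rcases (cut_verts_mem.mp (hv x (List.mem_cons_self))).1 with hxW | hxE
    · obtain ⟨l1', l2', heq, hW', hE', hj⟩ :=
        ih (fun v hvv => hv v (List.mem_cons_of_mem x hvv))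
          (fun g hg => he g (covers_of_covers_tail hg))
      cases l1' with
      | nil =>
        simp at heq
        subst heq
        cases t with
        | nil => exact ⟨[x], [], rfl, by simp [hxW], by simp, Or.inr (Or.inl rfl)⟩
        | cons y s =>
          have hy : y ∈ DE.verts := hE' y (List.mem_cons_self)
          have hedge := he (x, y) (covers_head₂ _ _ _)
          rcases inWnew_of_fst hoW hoE hdisj heE hedge hxW with hn | hn
          · have hx1 : x = eW.1 := congrArg Prod.fst hn
            have hy1 : y = eE.2 := congrArg Prod.snd hn
            exact ⟨[x], y :: s, rfl, by simp [hxW], hE',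
              Or.inr (Or.inr ⟨by simp [hx1], by simp [hy1]⟩)⟩
          · exact absurd (hoW.1 _ hn.1).2 (ctx_notW hdisj hy)
      | cons z s =>
        refine ⟨x :: z :: s, l2', by rw [heq]; rfl, ?_, hE', ?_⟩
        · intro v hvv
          rcases List.mem_cons.mp hvv with rfl | hvv
          · exact hxW
          · exact hW' v hvv
        · rcases hj with hj | hj | hj
          · simp at hj
          · exact Or.inr (Or.inl hj)
          · exact Or.inr (Or.inr ⟨by rw [List.getLast?_cons_cons]; exact hj.1, hj.2⟩)
    · refine ⟨[], x :: t, rfl, by simp, ?_, Or.inl rfl⟩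
      exact absorbE hoW hoE hdisj heW heE he rfl hxE

end CtxTransfer
section BasicFacts

variable {D : DG} {b : ℕ}
variable (ho : D.IsOriented) (htouch : ∀ e ∈ D.edges, e.1 = b ∨ e.2 = b)

include ho htouch in
lemma basic_WEdge {g : ℕ × ℕ} (hg : g ∈ D.edges) (h2 : g.2 = b) :
    D.isWEdge g := by
  refine ⟨hg, (ho.1 _ hg).1, fun u hu => ?_⟩
  rcases htouch _ hu with h1 | h1
  · have h1' : u = b := h1
    have hu' : (b, g.1) ∈ D.edges := by rw [← h1']; exact hu
    have hg' : (g.1, b) ∈ D.edges := by rw [← h2]; exact (Prod.mk.eta (p := g)) ▸ hg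
    exact ho.2.2.1 g.1 b hg' hu'
  · have h1' : g.1 = b := h1
    exact ho.2.1 _ hg (by rw [h1', h2])

include ho htouch in
lemma basic_EEdge {g : ℕ × ℕ} (hg : g ∈ D.edges) (h1 : g.1 = b) :
    D.isEEdge g := by
  refine ⟨hg, (ho.1 _ hg).2, fun u hu => ?_⟩
  rcases htouch _ hu with h2 | h2
  · have h2' : g.2 = b := h2
    exact ho.2.1 _ hg (by rw [h1, h2'])
  · have h2' : u = b := h2
    have hu' : (g.2, b) ∈ D.edges := by rw [← h2']; exact hu
    have hg' : (b, g.2) ∈ D.edges := by rw [← h1]; exact (Prod.mk.eta (p := g)) ▸ hg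
    exact ho.2.2.1 b g.2 hg' hu'

include ho htouch in
lemma basic_inner_eq {v : ℕ} (hv : D.isInner v) : v = b := by
  by_contra hne
  obtain ⟨hm, ⟨x, hx⟩, ⟨y, hy⟩⟩ := hv
  have h1 : x = b := by
    rcases htouch _ hx with h | h
    · exact h
    · exact absurd h hne
  have h2 : y = b := by
    rcases htouch _ hy with h | h
    · exact absurd h hne
    · exact h
  have hx' : (b, v) ∈ D.edges := by rw [← h1]; exact hx
  have hy' : (v, b) ∈ D.edges := by rw [← h2]; exact hy
  exact ho.2.2.1 b v hx' hy'

end BasicFacts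

theorem oriented_root {G : CTree} (hG : IsConstruction G) :
    G.rootGraph.IsOriented := by
  induction hG with
  | leaf D ε h => exact h.1
  | node D ε eW eE GW GE hW hE hdisj heW heE hD hXYC hεW hεE ihW ihE =>
    show D.IsOriented
    rw [hD]
    exact cut_oriented ihW ihE hdisj heW heE

theorem noBoth_root {G : CTree} (hG : IsConstruction G) :
    ∀ g, G.rootGraph.isWEdge g → ¬ G.rootGraph.isEEdge g := by
  induction hG with
  | leaf D ε h =>
    obtain ⟨ho, b, hbv, htouch, hjoin, ⟨a0, ha0⟩, ⟨c0, hc0⟩, hdist, hNW, hNE⟩ := h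
    intro g hWg hEg
    rcases htouch _ hWg.1 with h1 | h1
    · exact hWg.2.2 a0 (by rw [h1]; exact ha0)
    · exact hEg.2.2 c0 (by rw [h1]; exact hc0)
  | node D ε eW eE GW GE hW hE hdisj heW heE hD hXYC hεW hεE ihW ihE =>
    have hoW := oriented_root hW
    have hoE := oriented_root hE
    intro g hWg hEg
    have hg : g ∈ D.edges := hWg.1
    rw [hD] at hg
    rcases cut_edges_mem.mp hg with hn | hn | hn
    · have h1 : g.1 = eW.1 := by rw [hn]
      have hWv : GW.rootGraph.isWVert eW.1 := by
        rw [← tW_W hoW hoE hdisj heW heE (ctx_a_mem hoW heW) (ctx_ab_ne hoW heW)]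
        rw [← h1, ← hD]
        exact hWg.2
      exact ihW eW ⟨heW.1.1, hWv⟩ heW.1
    · have hWv : GW.rootGraph.isWVert g.1 := by
        rw [← tW_W hoW hoE hdisj heW heE (hoW.1 _ hn.1).1 (Wside_edge heW hn.1 hn.2).1]
        rw [← hD]; exact hWg.2
      have hEv : GW.rootGraph.isEVert g.2 := by
        rw [← tE_W hoW hoE hdisj heW heE (hoW.1 _ hn.1).2 (Wside_edge heW hn.1 hn.2).2]
        rw [← hD]; exact hEg.2
      exact ihW g ⟨hn.1, hWv⟩ ⟨hn.1, hEv⟩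
    · have hWv : GE.rootGraph.isWVert g.1 := by
        rw [← tW_E hoW hoE hdisj heW heE (hoE.1 _ hn.1).1 (Eside_edge heE hn.1 hn.2).1]
        rw [← hD]; exact hWg.2
      have hEv : GE.rootGraph.isEVert g.2 := by
        rw [← tE_E hoW hoE hdisj heW heE (hoE.1 _ hn.1).2 (Eside_edge heE hn.1 hn.2).2]
        rw [← hD]; exact hEg.2
      exact ihE g ⟨hn.1, hWv⟩ ⟨hn.1, hEv⟩

section LamNode

variable {GW GE : CTree} {D : DG} {ε : DistE} {eW eE : ℕ × ℕ}

lemma lamG_node_def (a : ℕ) (Y : YDir) (X : XDir) :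
    lamG (CTree.node D ε eW eE GW GE) a Y X =
      if (if a ∈ GW.rootGraph.verts then lamG GW a Y X else lamG GE a Y X) = eW ∨
         (if a ∈ GW.rootGraph.verts then lamG GW a Y X else lamG GE a Y X) = eE
      then (eW.1, eE.2)
      else (if a ∈ GW.rootGraph.verts then lamG GW a Y X else lamG GE a Y X) := rfl

variable (hoW : GW.rootGraph.IsOriented) (hoE : GE.rootGraph.IsOriented)
  (hdisj : Disjoint GW.rootGraph.verts GE.rootGraph.verts)
  (heW : GW.rootGraph.funcEEdge eW) (heE : GE.rootGraph.funcWEdge eE)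
  (hPW : ProperLab GW.rootGraph (lamG GW))
  (hPE : ProperLab GE.rootGraph (lamG GE))

include hoW hoE hdisj heW heE hPW in
lemma lamG_node_WW {v : ℕ} (hinn : GW.rootGraph.isInner v) (Y : YDir) :
    lamG (CTree.node D ε eW eE GW GE) v Y XDir.W = lamG GW v Y XDir.W := by
  have hv : v ∈ GW.rootGraph.verts := hinn.1
  have hL := hPW v hinn Y
  have hne : v ≠ eW.2 := by
    intro hq
    subst hq
    exact heW.1.2.2 _ hinn.2.2.choose_spec
  have hne1 : lamG GW v Y XDir.W ≠ eW := fun hq => hne (by rw [← hL.2.1, hq])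
  have hne2 : lamG GW v Y XDir.W ≠ eE := by
    intro hq
    have : eE.1 ∈ GW.rootGraph.verts := (hoW.1 _ (hq ▸ hL.1)).1
    exact ctx_notW hdisj (ctx_c_mem hoE heE) this
  rw [lamG_node_def, if_pos hv, if_neg (by push_neg; exact ⟨hne1, hne2⟩)]

include hoW hoE hdisj heW heE hPW in
lemma lamG_node_WE {v : ℕ} (hinn : GW.rootGraph.isInner v) (Y : YDir) :
    lamG (CTree.node D ε eW eE GW GE) v Y XDir.E =
      (if lamG GW v Y XDir.E = eW then (eW.1, eE.2) else lamG GW v Y XDir.E) := by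
  have hv : v ∈ GW.rootGraph.verts := hinn.1
  have hL := hPW v hinn Y
  rw [lamG_node_def, if_pos hv]
  by_cases hq : lamG GW v Y XDir.E = eW
  · rw [if_pos (Or.inl hq), if_pos hq]
  · have hne2 : lamG GW v Y XDir.E ≠ eE := by
      intro hq2
      have : eE.1 ∈ GW.rootGraph.verts := (hoW.1 _ (hq2 ▸ hL.2.2.1)).1
      exact ctx_notW hdisj (ctx_c_mem hoE heE) this
    rw [if_neg (by push_neg; exact ⟨hq, hne2⟩), if_neg hq]

include hoW hoE hdisj heW heE hPE in
lemma lamG_node_EE {v : ℕ} (hinn : GE.rootGraph.isInner v) (Y : YDir) :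
    lamG (CTree.node D ε eW eE GW GE) v Y XDir.E = lamG GE v Y XDir.E := by
  have hv : v ∈ GE.rootGraph.verts := hinn.1
  have hnv : v ∉ GW.rootGraph.verts := ctx_notW hdisj hv
  have hL := hPE v hinn Y
  have hne : v ≠ eE.1 := by
    intro hq
    subst hq
    exact heE.1.2.2 _ hinn.2.1.choose_spec
  have hne1 : lamG GE v Y XDir.E ≠ eW := by
    intro hq
    have : eW.2 ∈ GE.rootGraph.verts := (hoE.1 _ (hq ▸ hL.2.2.1)).2
    exact ctx_notE hdisj (ctx_b_mem hoW heW) this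
  have hne2 : lamG GE v Y XDir.E ≠ eE := fun hq => hne (by rw [← hL.2.2.2, hq])
  rw [lamG_node_def, if_neg hnv, if_neg (by push_neg; exact ⟨hne1, hne2⟩)]

include hoW hoE hdisj heW heE hPE in
lemma lamG_node_EW {v : ℕ} (hinn : GE.rootGraph.isInner v) (Y : YDir) :
    lamG (CTree.node D ε eW eE GW GE) v Y XDir.W =
      (if lamG GE v Y XDir.W = eE then (eW.1, eE.2) else lamG GE v Y XDir.W) := by
  have hv : v ∈ GE.rootGraph.verts := hinn.1
  have hnv : v ∉ GW.rootGraph.verts := ctx_notW hdisj hv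
  have hL := hPE v hinn Y
  rw [lamG_node_def, if_neg hnv]
  by_cases hq : lamG GE v Y XDir.W = eE
  · rw [if_pos (Or.inr hq), if_pos hq]
  · have hne1 : lamG GE v Y XDir.W ≠ eW := by
      intro hq2
      have : eW.2 ∈ GE.rootGraph.verts := (hoE.1 _ (hq2 ▸ hL.1)).2
      exact ctx_notE hdisj (ctx_b_mem hoW heW) this
    rw [if_neg (by push_neg; exact ⟨hne1, hq⟩), if_neg hq]

end LamNode

theorem properLab_root {G : CTree} (hG : IsConstruction G) :
    ProperLab G.rootGraph (lamG G) := by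
  induction hG with
  | leaf D ε h =>
    obtain ⟨ho, b, hbv, htouch, hjoin, ⟨a0, ha0⟩, ⟨c0, hc0⟩, hdist, hNW, hNE⟩ := h
    intro v hv Y
    have hvb : v = b := basic_inner_eq ho htouch hv
    subst hvb
    exact ⟨(hdist Y).1, (hdist Y).2.1, (hdist Y).2.2.1, (hdist Y).2.2.2⟩
  | node D ε eW eE GW GE hW hE hdisj heW heE hD hXYC hεW hεE ihW ihE =>
    subst hD
    have hoW := oriented_root hW
    have hoE := oriented_root hE
    intro v hv Y
    have hv' : (DG.cut GW.rootGraph GE.rootGraph eW eE).isInner v := hv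
    have hvm := cut_verts_mem.mp hv'.1
    rcases hvm.1 with hside | hside
    · have hinn : GW.rootGraph.isInner v :=
        (innW hoW hoE hdisj heW heE hside hvm.2.1).mp hv
      have hL := ihW v hinn Y
      have hWval := lamG_node_WW hoW hoE hdisj heW heE ihW hinn (D := DG.cut GW.rootGraph GE.rootGraph eW eE) (ε := ε) Y
      have hEval := lamG_node_WE hoW hoE hdisj heW heE ihW hinn (D := DG.cut GW.rootGraph GE.rootGraph eW eE) (ε := ε) Y
      show _ ∧ _ ∧ _ ∧ _
      rw [hWval, hEval]
      refine ⟨memD_of_W hL.1 ?_, hL.2.1, ?_⟩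
      · intro hq
        exact hvm.2.1 (by rw [← hL.2.1, hq])
      · by_cases hq : lamG GW v Y XDir.E = eW
        · rw [if_pos hq]
          refine ⟨memD_new, ?_⟩
          have : v = eW.1 := by rw [← hL.2.2.2, hq]
          simp [this]
        · rw [if_neg hq]
          refine ⟨memD_of_W hL.2.2.1 hq, hL.2.2.2⟩
    · have hinn : GE.rootGraph.isInner v :=
        (innE hoW hoE hdisj heW heE hside hvm.2.2).mp hv
      have hL := ihE v hinn Y
      have hWval := lamG_node_EW hoW hoE hdisj heW heE ihE hinn (D := DG.cut GW.rootGraph GE.rootGraph eW eE) (ε := ε) Y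
      have hEval := lamG_node_EE hoW hoE hdisj heW heE ihE hinn (D := DG.cut GW.rootGraph GE.rootGraph eW eE) (ε := ε) Y
      show _ ∧ _ ∧ _ ∧ _
      rw [hWval, hEval]
      refine ⟨?_, ?_, memD_of_E hL.2.2.1 ?_, hL.2.2.2⟩
      · by_cases hq : lamG GE v Y XDir.W = eE
        · rw [if_pos hq]
          exact memD_new
        · rw [if_neg hq]
          exact memD_of_E hL.1 hq
      · by_cases hq : lamG GE v Y XDir.W = eE
        · rw [if_pos hq]
          rw [← hL.2.1, hq]
        · rw [if_neg hq]
          exact hL.2.1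
      · intro hq
        exact hvm.2.2 (by rw [← hL.2.2.2, hq])
section YXTransfer

variable {GW GE : CTree} {ε : DistE} {eW eE : ℕ × ℕ}
variable (hoW : GW.rootGraph.IsOriented) (hoE : GE.rootGraph.IsOriented)
  (hdisj : Disjoint GW.rootGraph.verts GE.rootGraph.verts)
  (heW : GW.rootGraph.funcEEdge eW) (heE : GE.rootGraph.funcWEdge eE)
  (hPW : ProperLab GW.rootGraph (lamG GW))
  (hPE : ProperLab GE.rootGraph (lamG GE))
  (hnbW : ∀ g, GW.rootGraph.isWEdge g → ¬ GW.rootGraph.isEEdge g)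
  (hnbE : ∀ g, GE.rootGraph.isWEdge g → ¬ GE.rootGraph.isEEdge g)

include hoW hoE hdisj heW heE hPW in
lemma yx_W_Wside {g : ℕ × ℕ} (hg : g ∈ GW.rootGraph.edges) (hne : g ≠ eW) (Y : YDir) :
    YXedge (DG.cut GW.rootGraph GE.rootGraph eW eE)
      (lamG (CTree.node (DG.cut GW.rootGraph GE.rootGraph eW eE) ε eW eE GW GE))
      Y XDir.W g ↔
    YXedge GW.rootGraph (lamG GW) Y XDir.W g := by
  have hgD := memD_of_W (DE := GE.rootGraph) (eE := eE) hg hne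
  have hv2 : g.2 ∈ GW.rootGraph.verts := (hoW.1 _ hg).2
  have hne2 : g.2 ≠ eW.2 := (Wside_edge heW hg hne).2
  simp only [YXedge]
  by_cases hinn : GW.rootGraph.isInner g.2
  · have hinnD := (innW hoW hoE hdisj heW heE hv2 hne2).mpr hinn
    have hLW := lamG_node_WW hoW hoE hdisj heW heE hPW hinn
      (D := DG.cut GW.rootGraph GE.rootGraph eW eE) (ε := ε) Y
    constructor
    · rintro ⟨-, hor | hor⟩
      · exact ⟨hg, Or.inl (by rw [← hLW]; exact hor)⟩
      · obtain ⟨w, hw⟩ := hinnD.2.2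
        exact absurd hw (hor.2.2 w)
    · rintro ⟨-, hor | hor⟩
      · exact ⟨hgD, Or.inl (by rw [hLW]; exact hor)⟩
      · obtain ⟨w, hw⟩ := hinn.2.2
        exact absurd hw (hor.2.2 w)
  · have hEW : GW.rootGraph.isEVert g.2 :=
      ⟨hv2, fun u hu => hinn ⟨hv2, ⟨g.1, (Prod.mk.eta (p := g)) ▸ hg⟩, ⟨u, hu⟩⟩⟩
    have hED : (DG.cut GW.rootGraph GE.rootGraph eW eE).isEVert g.2 :=
      ⟨vW_memD hoE hdisj heE hv2 hne2, fun u hu => hinn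
        ((innW hoW hoE hdisj heW heE hv2 hne2).mp
          ⟨vW_memD hoE hdisj heE hv2 hne2, ⟨g.1, (Prod.mk.eta (p := g)) ▸ hgD⟩, ⟨u, hu⟩⟩)⟩
    exact iff_of_true ⟨hgD, Or.inr ⟨hgD, hED⟩⟩ ⟨hg, Or.inr ⟨hg, hEW⟩⟩

include hoW hoE hdisj heW heE hPW in
lemma yx_E_Wside {g : ℕ × ℕ} (hg : g ∈ GW.rootGraph.edges) (hne : g ≠ eW) (Y : YDir) :
    YXedge (DG.cut GW.rootGraph GE.rootGraph eW eE)
      (lamG (CTree.node (DG.cut GW.rootGraph GE.rootGraph eW eE) ε eW eE GW GE))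
      Y XDir.E g ↔
    YXedge GW.rootGraph (lamG GW) Y XDir.E g := by
  have hgD := memD_of_W (DE := GE.rootGraph) (eE := eE) hg hne
  have hv1 : g.1 ∈ GW.rootGraph.verts := (hoW.1 _ hg).1
  have hne1 : g.1 ≠ eW.2 := (Wside_edge heW hg hne).1
  simp only [YXedge]
  by_cases hinn : GW.rootGraph.isInner g.1
  · have hinnD := (innW hoW hoE hdisj heW heE hv1 hne1).mpr hinn
    have hLE := lamG_node_WE hoW hoE hdisj heW heE hPW hinn
      (D := DG.cut GW.rootGraph GE.rootGraph eW eE) (ε := ε) Y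
    constructor
    · rintro ⟨-, hor | hor⟩
      · rw [hLE] at hor
        by_cases hq : lamG GW g.1 Y XDir.E = eW
        · rw [if_pos hq] at hor
          exfalso
          have : g.2 = eE.2 := by rw [← hor]
          exact ctx_notW hdisj (ctx_d_mem hoE heE) (by rw [← this]; exact (hoW.1 _ hg).2)
        · rw [if_neg hq] at hor
          exact ⟨hg, Or.inl hor⟩
      · obtain ⟨u, hu⟩ := hinnD.2.1
        exact absurd hu (hor.2.2 u)
    · rintro ⟨-, hor | hor⟩
      · have hq : lamG GW g.1 Y XDir.E ≠ eW := by rw [hor]; exact hne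
        exact ⟨hgD, Or.inl (by rw [hLE, if_neg hq]; exact hor)⟩
      · obtain ⟨u, hu⟩ := hinn.2.1
        exact absurd hu (hor.2.2 u)
  · have hWW : GW.rootGraph.isWVert g.1 :=
      ⟨hv1, fun u hu => hinn ⟨hv1, ⟨u, hu⟩, ⟨g.2, (Prod.mk.eta (p := g)) ▸ hg⟩⟩⟩
    have hWD : (DG.cut GW.rootGraph GE.rootGraph eW eE).isWVert g.1 :=
      ⟨vW_memD hoE hdisj heE hv1 hne1, fun u hu => hinn
        ((innW hoW hoE hdisj heW heE hv1 hne1).mp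
          ⟨vW_memD hoE hdisj heE hv1 hne1, ⟨u, hu⟩, ⟨g.2, (Prod.mk.eta (p := g)) ▸ hgD⟩⟩)⟩
    exact iff_of_true ⟨hgD, Or.inr ⟨hgD, hWD⟩⟩ ⟨hg, Or.inr ⟨hg, hWW⟩⟩

include hoW hoE hdisj heW heE hPE in
lemma yx_E_Eside {g : ℕ × ℕ} (hg : g ∈ GE.rootGraph.edges) (hne : g ≠ eE) (Y : YDir) :
    YXedge (DG.cut GW.rootGraph GE.rootGraph eW eE)
      (lamG (CTree.node (DG.cut GW.rootGraph GE.rootGraph eW eE) ε eW eE GW GE))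
      Y XDir.E g ↔
    YXedge GE.rootGraph (lamG GE) Y XDir.E g := by
  have hgD := memD_of_E (DW := GW.rootGraph) (eW := eW) hg hne
  have hv1 : g.1 ∈ GE.rootGraph.verts := (hoE.1 _ hg).1
  have hne1 : g.1 ≠ eE.1 := (Eside_edge heE hg hne).1
  simp only [YXedge]
  by_cases hinn : GE.rootGraph.isInner g.1
  · have hinnD := (innE hoW hoE hdisj heW heE hv1 hne1).mpr hinn
    have hLE := lamG_node_EE hoW hoE hdisj heW heE hPE hinn
      (D := DG.cut GW.rootGraph GE.rootGraph eW eE) (ε := ε) Y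
    constructor
    · rintro ⟨-, hor | hor⟩
      · exact ⟨hg, Or.inl (by rw [← hLE]; exact hor)⟩
      · obtain ⟨u, hu⟩ := hinnD.2.1
        exact absurd hu (hor.2.2 u)
    · rintro ⟨-, hor | hor⟩
      · exact ⟨hgD, Or.inl (by rw [hLE]; exact hor)⟩
      · obtain ⟨u, hu⟩ := hinn.2.1
        exact absurd hu (hor.2.2 u)
  · have hWW : GE.rootGraph.isWVert g.1 :=
      ⟨hv1, fun u hu => hinn ⟨hv1, ⟨u, hu⟩, ⟨g.2, (Prod.mk.eta (p := g)) ▸ hg⟩⟩⟩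
    have hWD : (DG.cut GW.rootGraph GE.rootGraph eW eE).isWVert g.1 :=
      ⟨vE_memD hoW hdisj heW hv1 hne1, fun u hu => hinn
        ((innE hoW hoE hdisj heW heE hv1 hne1).mp
          ⟨vE_memD hoW hdisj heW hv1 hne1, ⟨u, hu⟩, ⟨g.2, (Prod.mk.eta (p := g)) ▸ hgD⟩⟩)⟩
    exact iff_of_true ⟨hgD, Or.inr ⟨hgD, hWD⟩⟩ ⟨hg, Or.inr ⟨hg, hWW⟩⟩

include hoW hoE hdisj heW heE hPE in
lemma yx_W_Eside {g : ℕ × ℕ} (hg : g ∈ GE.rootGraph.edges) (hne : g ≠ eE) (Y : YDir) :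
    YXedge (DG.cut GW.rootGraph GE.rootGraph eW eE)
      (lamG (CTree.node (DG.cut GW.rootGraph GE.rootGraph eW eE) ε eW eE GW GE))
      Y XDir.W g ↔
    YXedge GE.rootGraph (lamG GE) Y XDir.W g := by
  have hgD := memD_of_E (DW := GW.rootGraph) (eW := eW) hg hne
  have hv2 : g.2 ∈ GE.rootGraph.verts := (hoE.1 _ hg).2
  have hne2 : g.2 ≠ eE.1 := (Eside_edge heE hg hne).2
  simp only [YXedge]
  by_cases hinn : GE.rootGraph.isInner g.2
  · have hinnD := (innE hoW hoE hdisj heW heE hv2 hne2).mpr hinn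
    have hLW := lamG_node_EW hoW hoE hdisj heW heE hPE hinn
      (D := DG.cut GW.rootGraph GE.rootGraph eW eE) (ε := ε) Y
    constructor
    · rintro ⟨-, hor | hor⟩
      · rw [hLW] at hor
        by_cases hq : lamG GE g.2 Y XDir.W = eE
        · rw [if_pos hq] at hor
          exfalso
          have : g.1 = eW.1 := by rw [← hor]
          exact ctx_notE hdisj (ctx_a_mem hoW heW) (by rw [← this]; exact (hoE.1 _ hg).1)
        · rw [if_neg hq] at hor
          exact ⟨hg, Or.inl hor⟩
      · obtain ⟨w, hw⟩ := hinnD.2.2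
        exact absurd hw (hor.2.2 w)
    · rintro ⟨-, hor | hor⟩
      · have hq : lamG GE g.2 Y XDir.W ≠ eE := by rw [hor]; exact hne
        exact ⟨hgD, Or.inl (by rw [hLW, if_neg hq]; exact hor)⟩
      · obtain ⟨w, hw⟩ := hinn.2.2
        exact absurd hw (hor.2.2 w)
  · have hEE : GE.rootGraph.isEVert g.2 :=
      ⟨hv2, fun u hu => hinn ⟨hv2, ⟨g.1, (Prod.mk.eta (p := g)) ▸ hg⟩, ⟨u, hu⟩⟩⟩
    have hED : (DG.cut GW.rootGraph GE.rootGraph eW eE).isEVert g.2 :=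
      ⟨vE_memD hoW hdisj heW hv2 hne2, fun u hu => hinn
        ((innE hoW hoE hdisj heW heE hv2 hne2).mp
          ⟨vE_memD hoW hdisj heW hv2 hne2, ⟨g.1, (Prod.mk.eta (p := g)) ▸ hgD⟩, ⟨u, hu⟩⟩)⟩
    exact iff_of_true ⟨hgD, Or.inr ⟨hgD, hED⟩⟩ ⟨hg, Or.inr ⟨hg, hEE⟩⟩

include hoW hoE hdisj heW heE hPE hnbE in
lemma yx_W_new (Y : YDir) :
    YXedge (DG.cut GW.rootGraph GE.rootGraph eW eE)
      (lamG (CTree.node (DG.cut GW.rootGraph GE.rootGraph eW eE) ε eW eE GW GE))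
      Y XDir.W (eW.1, eE.2) ↔
    lamG GE eE.2 Y XDir.W = eE := by
  have hinnE : GE.rootGraph.isInner eE.2 := innerD hoE heE hnbE
  have hinnD := (innE hoW hoE hdisj heW heE (ctx_d_mem hoE heE)
    (Ne.symm (ctx_cd_ne hoE heE))).mpr hinnE
  have hLW := lamG_node_EW hoW hoE hdisj heW heE hPE hinnE
    (D := DG.cut GW.rootGraph GE.rootGraph eW eE) (ε := ε) Y
  simp only [YXedge]
  constructor
  · rintro ⟨-, hor | hor⟩
    · by_cases hq : lamG GE eE.2 Y XDir.W = eE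
      · exact hq
      · exfalso
        rw [hLW, if_neg hq] at hor
        have : eW.1 ∈ GE.rootGraph.verts := by
          rw [← show (lamG GE eE.2 Y XDir.W).1 = eW.1 by rw [hor]]
          exact (hoE.1 _ (hPE _ hinnE Y).1).1
        exact ctx_notW hdisj this (ctx_a_mem hoW heW)
    · obtain ⟨w, hw⟩ := hinnD.2.2
      exact absurd hw (hor.2.2 w)
  · intro hq
    exact ⟨memD_new, Or.inl (by rw [hLW, if_pos hq])⟩

include hoW hoE hdisj heW heE hPW hnbW in
lemma yx_E_new (Y : YDir) :
    YXedge (DG.cut GW.rootGraph GE.rootGraph eW eE)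
      (lamG (CTree.node (DG.cut GW.rootGraph GE.rootGraph eW eE) ε eW eE GW GE))
      Y XDir.E (eW.1, eE.2) ↔
    lamG GW eW.1 Y XDir.E = eW := by
  have hinnW : GW.rootGraph.isInner eW.1 := innerA hoW heW hnbW
  have hinnD := (innW hoW hoE hdisj heW heE (ctx_a_mem hoW heW)
    (ctx_ab_ne hoW heW)).mpr hinnW
  have hLE := lamG_node_WE hoW hoE hdisj heW heE hPW hinnW
    (D := DG.cut GW.rootGraph GE.rootGraph eW eE) (ε := ε) Y
  simp only [YXedge]
  constructor
  · rintro ⟨-, hor | hor⟩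
    · by_cases hq : lamG GW eW.1 Y XDir.E = eW
      · exact hq
      · exfalso
        rw [hLE, if_neg hq] at hor
        have : eE.2 ∈ GW.rootGraph.verts := by
          rw [← show (lamG GW eW.1 Y XDir.E).2 = eE.2 by rw [hor]]
          exact (hoW.1 _ (hPW _ hinnW Y).2.2.1).2
        exact ctx_notE hdisj this (ctx_d_mem hoE heE)
    · obtain ⟨u, hu⟩ := hinnD.2.1
      exact absurd hu (hor.2.2 u)
  · intro hq
    exact ⟨memD_new, Or.inl (by rw [hLE, if_pos hq])⟩

end YXTransfer

theorem distEdge {G : CTree} (hG : IsConstruction G) (Y : YDir) (Xx : XDir) :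
    G.rootGraph.isXEdge Xx (G.dist Y Xx) := by
  induction hG with
  | leaf D ε h =>
    obtain ⟨ho, b, hbv, htouch, hjoin, ⟨a0, ha0⟩, ⟨c0, hc0⟩, hdist, hNW, hNE⟩ := h
    cases Xx with
    | W => exact basic_WEdge ho htouch (hdist Y).1 (hdist Y).2.1
    | E => exact basic_EEdge ho htouch (hdist Y).2.2.1 (hdist Y).2.2.2
  | node D ε eW eE GW GE hW hE hdisj heW heE hD hXYC hεW hεE ihW ihE =>
    subst hD
    have hoW := oriented_root hW
    have hoE := oriented_root hE
    have hnbW := noBoth_root hW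
    have hnbE := noBoth_root hE
    cases Xx with
    | W =>
      show (DG.cut GW.rootGraph GE.rootGraph eW eE).isWEdge (ε Y XDir.W)
      rw [hεW Y]
      by_cases hc : eE = GE.dist Y XDir.W
      · rw [if_pos hc]
        have ihw : GW.rootGraph.isWEdge (GW.dist Y XDir.W) := ihW
        have hne : GW.dist Y XDir.W ≠ eW := by
          intro hq
          exact hnbW _ ihw (hq ▸ heW.1)
        refine ⟨memD_of_W ihw.1 hne, ?_⟩
        exact (tW_W hoW hoE hdisj heW heE (hoW.1 _ ihw.1).1
          (Wside_edge heW ihw.1 hne).1).mpr ihw.2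
      · rw [if_neg hc]
        have ihe : GE.rootGraph.isWEdge (GE.dist Y XDir.W) := ihE
        have hne : GE.dist Y XDir.W ≠ eE := fun hq => hc hq.symm
        refine ⟨memD_of_E ihe.1 hne, ?_⟩
        exact (tW_E hoW hoE hdisj heW heE (hoE.1 _ ihe.1).1
          (Eside_edge heE ihe.1 hne).1).mpr ihe.2
    | E =>
      show (DG.cut GW.rootGraph GE.rootGraph eW eE).isEEdge (ε Y XDir.E)
      rw [hεE Y]
      by_cases hc : eW = GW.dist Y XDir.E
      · rw [if_pos hc]
        have ihe : GE.rootGraph.isEEdge (GE.dist Y XDir.E) := ihE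
        have hne : GE.dist Y XDir.E ≠ eE := by
          intro hq
          exact hnbE _ (hq ▸ heE.1) ihe
        refine ⟨memD_of_E ihe.1 hne, ?_⟩
        exact (tE_E hoW hoE hdisj heW heE (hoE.1 _ ihe.1).2
          (Eside_edge heE ihe.1 hne).2).mpr ihe.2
      · rw [if_neg hc]
        have ihw : GW.rootGraph.isEEdge (GW.dist Y XDir.E) := ihW
        have hne : GW.dist Y XDir.E ≠ eW := fun hq => hc hq.symm
        refine ⟨memD_of_W ihw.1 hne, ?_⟩
        exact (tE_W hoW hoE hdisj heW heE (hoW.1 _ ihw.1).2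
          (Wside_edge heW ihw.1 hne).2).mpr ihw.2
section Surgery

lemma path_surgery {l : List ℕ} {w1 w2 a b : ℕ} {s t : List ℕ}
    (h1 : l = w1 :: w2 :: s) (h2 : l.reverse = b :: a :: t)
    (hne : ¬ (w1 = a ∧ w2 = b)) :
    ∃ s', l = (w1 :: w2 :: s') ++ [b] ∧ (w1 :: w2 :: s').getLast? = some a := by
  have hl : l = (a :: t).reverse ++ [b] := by
    have := congrArg List.reverse h2
    simpa using this
  have hql : (a :: t).reverse.getLast? = some a := by
    rw [List.getLast?_reverse]
    rfl
  have hqeq : (a :: t).reverse ++ [b] = w1 :: w2 :: s := hl.symm.trans h1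
  cases hq : (a :: t).reverse with
  | nil => simp [hq] at hqeq
  | cons x q' =>
    rw [hq] at hqeq
    simp only [List.cons_append] at hqeq
    have hx : x = w1 := (List.cons.injEq _ _ _ _ ▸ hqeq).1
    have hrest : q' ++ [b] = w2 :: s := (List.cons.injEq _ _ _ _ ▸ hqeq).2
    cases q' with
    | nil =>
      exfalso
      have hb : b = w2 := (List.cons.injEq _ _ _ _ ▸ hrest).1
      have hxa : x = a := by
        rw [hq] at hql
        simpa using hql
      exact hne ⟨by rw [← hx, hxa], hb.symm⟩
    | cons y q'' =>
      have hy : y = w2 := by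
        simp only [List.cons_append] at hrest
        exact (List.cons.injEq _ _ _ _ ▸ hrest).1
      refine ⟨q'', ?_, ?_⟩
      · rw [hl, hq, hx, hy]
      · rw [← hx, ← hy, ← hq]
        exact hql

end Surgery

section JoinPath

variable {DW DE : DG} {eW eE : ℕ × ℕ}
variable (hoW : DW.IsOriented) (hoE : DE.IsOriented)
  (hdisj : Disjoint DW.verts DE.verts)
  (heW : DW.funcEEdge eW) (heE : DE.funcWEdge eE)

include hoW hoE hdisj heW heE in
lemma join_path {q r : List ℕ}
    (hq : DW.IsPath (q ++ [eW.2])) (hr : DE.IsPath (eE.1 :: r))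
    (hqne : q ≠ []) (hrne : r ≠ []) :
    (DG.cut DW DE eW eE).IsPath (q ++ r) ∧
      q.getLast? = some eW.1 ∧ r.head? = some eE.2 ∧
      (∀ g, covers q g → g ∈ DW.edges ∧ g ≠ eW) ∧
      (∀ g, covers r g → g ∈ DE.edges ∧ g ≠ eE) := by
  have hqnodup : q.Nodup ∧ eW.2 ∉ q := by
    have := hq.2.2.1
    rw [List.nodup_append] at this
    exact ⟨this.1, fun hb => this.2.2 _ hb _ (List.mem_singleton_self _) rfl⟩
  have hrnodup : r.Nodup ∧ eE.1 ∉ r := by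
    have := hr.2.2.1
    rw [List.nodup_cons] at this
    exact ⟨this.2, this.1⟩
  have hqverts : ∀ v ∈ q, v ∈ DW.verts :=
    fun v hv => hq.2.1 v (List.mem_append_left _ hv)
  have hrverts : ∀ v ∈ r, v ∈ DE.verts :=
    fun v hv => hr.2.1 v (List.mem_cons_of_mem _ hv)
  have hqcov : ∀ g, covers q g → g ∈ DW.edges ∧ g ≠ eW := by
    intro g hg
    have hmem : g ∈ DW.edges :=
      chain'_iff_covers.mp hq.2.2.2 g (covers_append_left hg)
    refine ⟨hmem, fun hgq => ?_⟩
    have : g.2 ∈ q := (covers_mem hg).2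
    rw [hgq] at this
    exact hqnodup.2 this
  have hrcov : ∀ g, covers r g → g ∈ DE.edges ∧ g ≠ eE := by
    intro g hg
    have hmem : g ∈ DE.edges :=
      chain'_iff_covers.mp hr.2.2.2 g (covers_of_covers_tail hg)
    refine ⟨hmem, fun hgr => ?_⟩
    have : g.1 ∈ r := (covers_mem hg).1
    rw [hgr] at this
    exact hrnodup.2 this
  obtain ⟨x, hx⟩ : ∃ x, q.getLast? = some x := by
    cases hq2 : q with
    | nil => exact absurd hq2 hqne
    | cons z zs => exact ⟨_, List.getLast?_eq_getLast (by simp)⟩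
  have hxa : x = eW.1 := by
    have hcov : covers (q ++ [eW.2]) (x, eW.2) :=
      covers_append_junction hx rfl
    exact heW.2 x (chain'_iff_covers.mp hq.2.2.2 _ hcov)
  obtain ⟨y, r', rfl⟩ := List.exists_cons_of_ne_nil hrne
  have hyd : y = eE.2 := by
    have hcov : covers (eE.1 :: y :: r') (eE.1, y) := covers_head₂ _ _ _
    exact heE.2 y (chain'_iff_covers.mp hr.2.2.2 _ hcov)
  have hql : q.getLast? = some eW.1 := by rw [hx, hxa]
  have hrh : (y :: r').head? = some eE.2 := by rw [List.head?_cons, hyd]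
  refine ⟨⟨?_, ?_, ?_, ?_⟩, hql, hrh, hqcov, hrcov⟩
  · intro hc
    exact hqne (List.append_eq_nil_iff.mp hc).1
  · intro v hv
    rcases List.mem_append.mp hv with hv | hv
    · exact vW_memD hoE hdisj heE (hqverts v hv)
        (fun hb => hqnodup.2 (hb ▸ hv))
    · exact vE_memD hoW hdisj heW (hrverts v hv)
        (fun hc => hrnodup.2 (hc ▸ hv))
  · rw [List.nodup_append]
    refine ⟨hqnodup.1, hrnodup.1, fun v hv w hv' hvw => ?_⟩
    subst hvw
    exact ctx_notE hdisj (hqverts v hv) (hrverts v hv')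
  · rw [chain'_iff_covers]
    intro g hg
    rcases covers_append_cases hg with hg | hg | hg
    · exact memD_of_W (hqcov g hg).1 (hqcov g hg).2
    · exact memD_of_E (hrcov g hg).1 (hrcov g hg).2
    · have h1 : g.1 = eW.1 := by
        rw [hql] at hg
        exact (Option.some.injEq _ _ ▸ hg.1).symm
      have h2 : g.2 = eE.2 := by
        rw [hrh] at hg
        exact (Option.some.injEq _ _ ▸ hg.2).symm
      have : g = (eW.1, eE.2) := by
        rw [← h1, ← h2]
      rw [this]
      exact memD_new

end JoinPath
section ExistsP

lemma prod_ext' {p q : ℕ × ℕ} (h1 : p.1 = q.1) (h2 : p.2 = q.2) : p = q := by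
  obtain ⟨a, b⟩ := p
  obtain ⟨c, d⟩ := q
  simp only [] at h1 h2
  rw [h1, h2]

lemma covers_of_struct {l : List ℕ} {p : ℕ × ℕ} {t : List ℕ}
    (h : l = p.1 :: p.2 :: t) : covers l p := by
  have h1 : covers l (p.1, p.2) := by rw [h]; exact covers_head₂ _ _ _
  exact (Prod.mk.eta (p := p)) ▸ h1

lemma covers_of_reverse_struct {l : List ℕ} {p : ℕ × ℕ} {t : List ℕ}
    (h : l.reverse = p.2 :: p.1 :: t) : covers l p := by
  have h1 : covers l.reverse (p.2, p.1) := by rw [h]; exact covers_head₂ _ _ _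
  have h2 := covers_reverse h1
  rw [List.reverse_reverse] at h2
  have h3 : covers l (p.1, p.2) := h2
  exact (Prod.mk.eta (p := p)) ▸ h3

theorem existsP {G : CTree} (hG : IsConstruction G) (Y : YDir) :
    ∃ l s t, G.rootGraph.IsPath l ∧
      l = (G.dist Y XDir.W).1 :: (G.dist Y XDir.W).2 :: s ∧
      l.reverse = (G.dist Y XDir.E).2 :: (G.dist Y XDir.E).1 :: t := by
  induction hG with
  | leaf D ε h =>
    obtain ⟨ho, b, hbv, htouch, hjoin, ⟨a0, ha0⟩, ⟨c0, hc0⟩, hdist, hNW, hNE⟩ := h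
    have hwmem := (hdist Y).1
    have hw2 : (ε Y XDir.W).2 = b := (hdist Y).2.1
    have hemem := (hdist Y).2.2.1
    have he1 : (ε Y XDir.E).1 = b := (hdist Y).2.2.2
    have hw' : ((ε Y XDir.W).1, b) ∈ D.edges := by
      rw [← hw2]
      exact (Prod.mk.eta (p := ε Y XDir.W)).symm ▸ hwmem
    have he' : (b, (ε Y XDir.E).2) ∈ D.edges := by
      rw [← he1]
      exact (Prod.mk.eta (p := ε Y XDir.E)).symm ▸ hemem
    have hne1 : (ε Y XDir.W).1 ≠ b := by
      intro hq
      exact ho.2.1 _ hwmem (by rw [hq, hw2])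
    have hne2 : b ≠ (ε Y XDir.E).2 := by
      intro hq
      exact ho.2.1 _ hemem (by rw [he1, hq])
    have hne3 : (ε Y XDir.W).1 ≠ (ε Y XDir.E).2 := by
      intro hq
      exact ho.2.2.1 _ _ hw' (by rw [← hq] at he'; exact he')
    refine ⟨[(ε Y XDir.W).1, b, (ε Y XDir.E).2], [(ε Y XDir.E).2], [(ε Y XDir.W).1],
      ⟨by simp, ?_, ?_, ?_⟩, ?_, ?_⟩
    · intro v hv
      rcases List.mem_cons.mp hv with rfl | hv
      · exact (ho.1 _ hwmem).1
      · rcases List.mem_cons.mp hv with rfl | hv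
        · exact hbv
        · rcases List.mem_cons.mp hv with rfl | hv
          · exact (ho.1 _ hemem).2
          · simp at hv
    · simp [hne1, hne2, hne3]
    · rw [chain'_iff_covers]
      intro g hg
      rcases covers_cons₂.mp hg with rfl | hg
      · exact hw'
      · rcases covers_cons₂.mp hg with rfl | hg
        · exact he'
        · exact absurd hg (covers_single _ _)
    · show _ = (ε Y XDir.W).1 :: (ε Y XDir.W).2 :: _
      rw [hw2]
    · show _ = (ε Y XDir.E).2 :: (ε Y XDir.E).1 :: _
      rw [he1]
      rfl
  | node D ε eW eE GW GE hW hE hdisj heW heE hD hXYC hεW hεE ihW ihE =>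
    subst hD
    have hoW := oriented_root hW
    have hoE := oriented_root hE
    have hnbW := noBoth_root hW
    have hnbE := noBoth_root hE
    obtain ⟨pW, sW, tW, hpW, hpW1, hpW2⟩ := ihW
    obtain ⟨pE, sE, tE, hpE, hpE1, hpE2⟩ := ihE
    have hdWW : GW.rootGraph.isWEdge (GW.dist Y XDir.W) := distEdge hW Y XDir.W
    have hdWE : GW.rootGraph.isEEdge (GW.dist Y XDir.E) := distEdge hW Y XDir.E
    have hdEW : GE.rootGraph.isWEdge (GE.dist Y XDir.W) := distEdge hE Y XDir.W
    have hdEE : GE.rootGraph.isEEdge (GE.dist Y XDir.E) := distEdge hE Y XDir.E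
    have hWne : GW.dist Y XDir.W ≠ eW := fun hq => hnbW _ hdWW (hq ▸ heW.1)
    have hEne : GE.dist Y XDir.E ≠ eE := fun hq => hnbE _ (hq ▸ heE.1) hdEE
    show ∃ l s t, (DG.cut GW.rootGraph GE.rootGraph eW eE).IsPath l ∧
      l = (ε Y XDir.W).1 :: (ε Y XDir.W).2 :: s ∧
      l.reverse = (ε Y XDir.E).2 :: (ε Y XDir.E).1 :: t
    by_cases hcE : eE = GE.dist Y XDir.W
    · by_cases hcW : eW = GW.dist Y XDir.E
      · -- both cut edges are distinguished: join the two paths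
        rw [← hcW] at hpW2
        rw [← hcE] at hpE1
        have hne1 : ¬ ((GW.dist Y XDir.W).1 = eW.1 ∧ (GW.dist Y XDir.W).2 = eW.2) := by
          rintro ⟨u1, u2⟩
          exact hWne (prod_ext' u1 u2)
        obtain ⟨sW', hpWeq, hqlast⟩ := path_surgery hpW1 hpW2 hne1
        have hne2 : ¬ ((GE.dist Y XDir.E).2 = eE.2 ∧ (GE.dist Y XDir.E).1 = eE.1) := by
          rintro ⟨u1, u2⟩
          exact hEne (prod_ext' u2 u1)
        have hpE1' : pE.reverse.reverse = eE.1 :: eE.2 :: sE := by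
          rw [List.reverse_reverse]
          exact hpE1
        obtain ⟨u, hpEeq, hulast⟩ := path_surgery hpE2 hpE1' hne2
        -- cancellation: (eE.2 :: sE).reverse = (GE.dist Y E).2 :: (GE.dist Y E).1 :: u
        have hcancel : (eE.2 :: sE).reverse =
            (GE.dist Y XDir.E).2 :: (GE.dist Y XDir.E).1 :: u := by
          have h1 : pE.reverse = (eE.2 :: sE).reverse ++ [eE.1] := by
            rw [hpE1]
            simp
          have h2 := h1.symm.trans hpEeq
          have := congrArg List.dropLast h2
          rwa [List.dropLast_concat, List.dropLast_concat] at this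
        have hq' : GW.rootGraph.IsPath
            (((GW.dist Y XDir.W).1 :: (GW.dist Y XDir.W).2 :: sW') ++ [eW.2]) := by
          rw [← hpWeq]
          exact hpW
        have hr' : GE.rootGraph.IsPath (eE.1 :: (eE.2 :: sE)) := by
          rw [← hpE1]
          exact hpE
        obtain ⟨hpath, hql2, hrh, hqcov, hrcov⟩ :=
          join_path hoW hoE hdisj heW heE hq' hr' (by simp) (by simp)
        refine ⟨((GW.dist Y XDir.W).1 :: (GW.dist Y XDir.W).2 :: sW') ++ (eE.2 :: sE),
          sW' ++ (eE.2 :: sE), u ++ ((GW.dist Y XDir.W).1 :: (GW.dist Y XDir.W).2 :: sW').reverse,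
          hpath, ?_, ?_⟩
        · rw [hεW Y, if_pos hcE]
          rfl
        · rw [hεE Y, if_pos hcW]
          rw [List.reverse_append, hcancel]
          rfl
      · -- eE distinguished in GE, eW not distinguished in GW: use pW
        have hbnot : eW.2 ∉ pW := by
          intro hmem
          have hlast : pW.getLast? = some eW.2 :=
            mem_last_of_no_succ (S := fun g => g ∈ GW.rootGraph.edges)
              (chain'_iff_covers.mp hpW.2.2.2) hmem (fun u => heW.1.2.2 u)
          have hhead : pW.reverse.head? = some eW.2 := by
            rw [List.head?_reverse]
            exact hlast
          rw [hpW2] at hhead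
          have h2 : (GW.dist Y XDir.E).2 = eW.2 := by simpa using hhead
          have hcov : covers pW (GW.dist Y XDir.E) := covers_of_reverse_struct hpW2
          have hedge := chain'_iff_covers.mp hpW.2.2.2 _ hcov
          have h1 : (GW.dist Y XDir.E).1 = eW.1 := by
            apply heW.2
            rw [← h2]
            exact (Prod.mk.eta (p := GW.dist Y XDir.E)).symm ▸ hedge
          exact hcW (prod_ext' h1 h2).symm
        refine ⟨pW, sW, tW, pathD_of_W hoW hoE hdisj heW heE hpW hbnot, ?_, ?_⟩
        · rw [hεW Y, if_pos hcE]
          exact hpW1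
        · rw [hεE Y, if_neg hcW]
          exact hpW2
    · -- eE not distinguished: by (XYC), eW is distinguished; use pE
      have hcW : eW = GW.dist Y XDir.E := (hXYC Y).resolve_right hcE
      have hcnot : eE.1 ∉ pE := by
        intro hmem
        have hhead : pE.head? = some eE.1 :=
          mem_head_of_no_pred (S := fun g => g ∈ GE.rootGraph.edges)
            (chain'_iff_covers.mp hpE.2.2.2) hmem (fun u => heE.1.2.2 u)
        rw [hpE1] at hhead
        have h1 : (GE.dist Y XDir.W).1 = eE.1 := by simpa using hhead
        have hcov : covers pE (GE.dist Y XDir.W) := covers_of_struct hpE1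
        have hedge := chain'_iff_covers.mp hpE.2.2.2 _ hcov
        have h2 : (GE.dist Y XDir.W).2 = eE.2 := by
          apply heE.2
          rw [← h1]
          exact (Prod.mk.eta (p := GE.dist Y XDir.W)).symm ▸ hedge
        exact hcE (prod_ext' h1 h2).symm
      refine ⟨pE, sE, tE, pathD_of_E hoW hoE hdisj heW heE hpE hcnot, ?_, ?_⟩
      · rw [hεW Y, if_neg hcE]
        exact hpE1
      · rw [hεE Y, if_pos hcW]
        exact hpE2

end ExistsP
section MainHelpers

lemma getLast?_exists {l : List ℕ} (h : l ≠ []) : ∃ x, l.getLast? = some x := by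
  cases l with
  | nil => exact absurd rfl h
  | cons z t => exact ⟨_, List.getLast?_eq_getLast (by simp)⟩

lemma decomp_last {l : List ℕ} {x : ℕ} (h : l.getLast? = some x) :
    l = l.dropLast ++ [x] := by
  cases hl : l with
  | nil => rw [hl] at h; simp at h
  | cons z t =>
    rw [← hl]
    have hne : l ≠ [] := by rw [hl]; simp
    have h2 := List.getLast?_eq_getLast hne
    rw [h2] at h
    have hx : l.getLast hne = x := by simpa using h
    rw [← hx]
    exact (List.dropLast_append_getLast hne).symm

lemma covers_length {l : List ℕ} {g : ℕ × ℕ} (h : covers l g) : 2 ≤ l.length := by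
  obtain ⟨u, v, rfl⟩ := covers_iff_append.mp h
  simp
  omega

lemma rev_decomp {l : List ℕ} {b a : ℕ} {t : List ℕ} (h : l.reverse = b :: a :: t) :
    l = (a :: t).reverse ++ [b] ∧ (a :: t).reverse.getLast? = some a ∧
      (a :: t).reverse ≠ [] := by
  refine ⟨?_, ?_, by simp⟩
  · have := congrArg List.reverse h
    simpa using this
  · rw [List.getLast?_reverse]
    rfl

section ExtendCtx

variable {DW DE : DG} {eW eE : ℕ × ℕ}
variable (hoW : DW.IsOriented) (hoE : DE.IsOriented)
  (hdisj : Disjoint DW.verts DE.verts)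
  (heW : DW.funcEEdge eW) (heE : DE.funcWEdge eE)

include hoW heW in
lemma extend_to_b {l1 : List ℕ} (hl1 : DW.IsPath l1) (hb : eW.2 ∉ l1)
    (hlast : l1.getLast? = some eW.1) : DW.IsPath (l1 ++ [eW.2]) := by
  refine ⟨by simp, ?_, ?_, ?_⟩
  · intro v hv
    rcases List.mem_append.mp hv with hv | hv
    · exact hl1.2.1 v hv
    · rw [List.mem_singleton.mp hv]
      exact ctx_b_mem hoW heW
  · rw [List.nodup_append]
    exact ⟨hl1.2.2.1, List.nodup_singleton _,
      fun v hv w hv' hvw => hb (by subst hvw; exact (List.mem_singleton.mp hv') ▸ hv)⟩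
  · rw [chain'_iff_covers]
    intro g hg
    rcases covers_append_cases hg with hg | hg | hg
    · exact chain'_iff_covers.mp hl1.2.2.2 g hg
    · exact absurd hg (covers_single _ _)
    · have h1 : g.1 = eW.1 := by
        rw [hlast] at hg
        exact (Option.some.injEq _ _ ▸ hg.1).symm
      have h2 : g.2 = eW.2 := by
        have := hg.2
        simp at this
        exact this.symm
      have : g = eW := prod_ext' h1 h2
      rw [this]
      exact heW.1.1

include hoE heE in
lemma extend_to_c {l2 : List ℕ} (hl2 : DE.IsPath l2) (hc : eE.1 ∉ l2)
    (hhead : l2.head? = some eE.2) : DE.IsPath (eE.1 :: l2) := by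
  refine ⟨by simp, ?_, ?_, ?_⟩
  · intro v hv
    rcases List.mem_cons.mp hv with rfl | hv
    · exact ctx_c_mem hoE heE
    · exact hl2.2.1 v hv
  · rw [List.nodup_cons]
    exact ⟨hc, hl2.2.2.1⟩
  · rw [chain'_iff_covers]
    intro g hg
    cases l2 with
    | nil => simp at hhead
    | cons y t =>
      have hy : y = eE.2 := by simpa using hhead
      rcases covers_cons₂.mp hg with rfl | hg
      · have : (eE.1, y) = eE := prod_ext' rfl hy
        rw [this]
        exact heE.1.1
      · exact chain'_iff_covers.mp hl2.2.2.2 g hg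

include hoW hoE hdisj heW heE in
lemma absorbW {l : List ℕ} {x : ℕ}
    (he : ∀ g, covers l g → g ∈ (DG.cut DW DE eW eE).edges)
    (hx : l.getLast? = some x) (hxW : x ∈ DW.verts) : ∀ v ∈ l, v ∈ DW.verts := by
  induction l with
  | nil => simp at hx
  | cons z t ih =>
    intro v hv
    cases t with
    | nil =>
      have : z = x := by simpa using hx
      rcases List.mem_cons.mp hv with rfl | hv
      · rw [this]; exact hxW
      · simp at hv
    | cons y s =>
      rw [List.getLast?_cons_cons] at hx
      have hall : ∀ w ∈ y :: s, w ∈ DW.verts :=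
        ih (fun g hg => he g (covers_of_covers_tail hg)) hx
      rcases List.mem_cons.mp hv with rfl | hv
      · have hedge := he (v, y) (covers_head₂ _ _ _)
        have hy : y ∈ DW.verts := hall y (List.mem_cons_self)
        exact (hoW.1 _ (inW_of_snd hoW hoE hdisj heE hedge hy).1).1
      · exact hall v hv

end ExtendCtx

lemma isPath_append_left {D : DG} {l1 l2 : List ℕ}
    (h : D.IsPath (l1 ++ l2)) (hne : l1 ≠ []) : D.IsPath l1 := by
  refine ⟨hne, fun v hv => h.2.1 v (List.mem_append_left _ hv),
    (List.nodup_append.mp h.2.2.1).1, ?_⟩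
  rw [chain'_iff_covers]
  intro g hg
  exact chain'_iff_covers.mp h.2.2.2 g (covers_append_left hg)

lemma isPath_append_right {D : DG} {l1 l2 : List ℕ}
    (h : D.IsPath (l1 ++ l2)) (hne : l2 ≠ []) : D.IsPath l2 := by
  refine ⟨hne, fun v hv => h.2.1 v (List.mem_append_right _ hv),
    (List.nodup_append.mp h.2.2.1).2.1, ?_⟩
  rw [chain'_iff_covers]
  intro g hg
  exact chain'_iff_covers.mp h.2.2.2 g (covers_append_right hg)

lemma isPath_two {D : DG} {x y : ℕ} (hx : x ∈ D.verts) (hy : y ∈ D.verts)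
    (hne : x ≠ y) (he : (x, y) ∈ D.edges) : D.IsPath [x, y] := by
  refine ⟨by simp, ?_, by simp [hne], ?_⟩
  · intro v hv
    rcases List.mem_cons.mp hv with rfl | hv
    · exact hx
    · rcases List.mem_cons.mp hv with rfl | hv
      · exact hy
      · simp at hv
  · rw [chain'_iff_covers]
    intro g hg
    rcases covers_cons₂.mp hg with rfl | hg
    · exact he
    · exact absurd hg (covers_single _ _)

end MainHelpers

/-- Proposition 4.2: `h = YX(G)` iff `h` is an `X`-edge of the root graph `D`
of `G` such that every path of `D` that covers `h` is a `YX`-path in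
`λ(G)`. -/
theorem prop_4_2 (G : CTree) (hG : IsConstruction G) (X : XDir) (Y : YDir)
    (h : ℕ × ℕ) (hh : h ∈ G.rootGraph.edges) :
    h = G.dist Y X ↔
      (G.rootGraph.isXEdge X h ∧
        ∀ l, G.rootGraph.IsPath l → covers l h →
          ∀ g, covers l g → YXedge G.rootGraph (lamG G) Y X g) := by
  induction hG generalizing h with
  | leaf D ε hB =>
    obtain ⟨ho, b, hbv, htouch, hjoin, ⟨a0, ha0⟩, ⟨c0, hc0⟩, hdist, hNW, hNE⟩ := hB
    have hh' : h ∈ D.edges := hh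
    cases X with
    | W =>
      constructor
      · intro heq
        have heq' : h = ε Y XDir.W := heq
        constructor
        · show D.isWEdge h
          rw [heq']
          exact basic_WEdge ho htouch (hdist Y).1 (hdist Y).2.1
        · intro l hl hcovh g hcovg
          have hl' : D.IsPath l := hl
          have hgmem : g ∈ D.edges := chain'_iff_covers.mp hl'.2.2.2 g hcovg
          show YXedge D (fun _ => ε) Y XDir.W g
          rcases htouch g hgmem with h1 | h1
          · exact ⟨hgmem, Or.inr (basic_EEdge ho htouch hgmem h1)⟩
          · have hsnd : g.2 = h.2 := by rw [h1, heq', (hdist Y).2.1]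
            have hgh := covers_inj_snd hl'.2.2.1 hcovg hcovh hsnd
            refine ⟨hgmem, Or.inl ?_⟩
            show ε Y XDir.W = g
            rw [hgh]
            exact heq'.symm
      · rintro ⟨hXW, hpaths⟩
        have hXW' : D.isWEdge h := hXW
        have hb2 : h.2 = b := by
          rcases htouch _ hh' with h1 | h1
          · exact absurd (by rw [h1]; exact ha0 : (a0, h.1) ∈ D.edges) (hXW'.2.2 a0)
          · exact h1
        have hpath2 : D.IsPath [h.1, h.2] :=
          isPath_two (ho.1 _ hh').1 (ho.1 _ hh').2 (ho.2.1 _ hh')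
            ((Prod.mk.eta (p := h)).symm ▸ hh')
        have hcovh : covers [h.1, h.2] h := covers_of_struct rfl
        have hyx := hpaths [h.1, h.2] hpath2 hcovh h hcovh
        rcases hyx.2 with hL | hEE
        · show h = ε Y XDir.W
          exact hL.symm
        · exfalso
          exact hEE.2.2 c0 (by rw [hb2]; exact hc0)
    | E =>
      constructor
      · intro heq
        have heq' : h = ε Y XDir.E := heq
        constructor
        · show D.isEEdge h
          rw [heq']
          exact basic_EEdge ho htouch (hdist Y).2.2.1 (hdist Y).2.2.2
        · intro l hl hcovh g hcovg
          have hl' : D.IsPath l := hl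
          have hgmem : g ∈ D.edges := chain'_iff_covers.mp hl'.2.2.2 g hcovg
          show YXedge D (fun _ => ε) Y XDir.E g
          rcases htouch g hgmem with h1 | h1
          · have hfst : g.1 = h.1 := by rw [h1, heq', (hdist Y).2.2.2]
            have hgh := covers_inj_fst hl'.2.2.1 hcovg hcovh hfst
            refine ⟨hgmem, Or.inl ?_⟩
            show ε Y XDir.E = g
            rw [hgh]
            exact heq'.symm
          · exact ⟨hgmem, Or.inr (basic_WEdge ho htouch hgmem h1)⟩
      · rintro ⟨hXE, hpaths⟩
        have hXE' : D.isEEdge h := hXE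
        have hb1 : h.1 = b := by
          rcases htouch _ hh' with h1 | h1
          · exact h1
          · exact absurd (by rw [h1]; exact hc0 : (h.2, c0) ∈ D.edges) (hXE'.2.2 c0)
        have hpath2 : D.IsPath [h.1, h.2] :=
          isPath_two (ho.1 _ hh').1 (ho.1 _ hh').2 (ho.2.1 _ hh')
            ((Prod.mk.eta (p := h)).symm ▸ hh')
        have hcovh : covers [h.1, h.2] h := covers_of_struct rfl
        have hyx := hpaths [h.1, h.2] hpath2 hcovh h hcovh
        rcases hyx.2 with hL | hWW
        · show h = ε Y XDir.E
          exact hL.symm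
        · exfalso
          exact hWW.2.2 a0 (by rw [hb1]; exact ha0)
  | node D ε eW eE GW GE hW hE hdisj heW heE hD hXYC hεW hεE ihW ihE =>
    subst hD
    have hoW := oriented_root hW
    have hoE := oriented_root hE
    have hnbW := noBoth_root hW
    have hnbE := noBoth_root hE
    have hPW := properLab_root hW
    have hPE := properLab_root hE
    have hh' : h ∈ (DG.cut GW.rootGraph GE.rootGraph eW eE).edges := hh
    have hGnode : IsConstruction
        (CTree.node (DG.cut GW.rootGraph GE.rootGraph eW eE) ε eW eE GW GE) :=
      IsConstruction.node _ _ _ _ _ _ hW hE hdisj heW heE rfl hXYC hεW hεE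
    cases X with
    | W =>
      constructor
      · intro heq
        have heq' : h = ε Y XDir.W := heq
        constructor
        · rw [heq]
          exact distEdge hGnode Y XDir.W
        · intro l hl hcovh g hcovg
          have hlD : (DG.cut GW.rootGraph GE.rootGraph eW eE).IsPath l := hl
          rw [hεW Y] at heq'
          by_cases hcE : eE = GE.dist Y XDir.W
          · rw [if_pos hcE] at heq'
            have hhW : h ∈ GW.rootGraph.edges := by
              rw [heq']; exact (distEdge hW Y XDir.W).1
            obtain ⟨hXWW, hpathsW⟩ := (ihW h hhW).mp heq'
            have hXWW' : GW.rootGraph.isWEdge h := hXWW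
            have hneW : h ≠ eW := fun hq => hnbW _ hXWW' (hq ▸ heW.1)
            obtain ⟨hXEE, hpathsE⟩ := (ihE eE heE.1.1).mp hcE
            have hLd : lamG GE eE.2 Y XDir.W = eE := by
              have hp2 : GE.rootGraph.IsPath [eE.1, eE.2] :=
                isPath_two (hoE.1 _ heE.1.1).1 (hoE.1 _ heE.1.1).2
                  (ctx_cd_ne hoE heE) ((Prod.mk.eta (p := eE)).symm ▸ heE.1.1)
              have hcov2 : covers [eE.1, eE.2] eE := covers_of_struct rfl
              have hyx := hpathsE [eE.1, eE.2] hp2 hcov2 eE hcov2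
              rcases hyx.2 with hL | hEE2
              · exact hL
              · exact absurd hEE2 (hnbE eE heE.1)
            obtain ⟨l1, l2, rfl, hW1, hE2, hjunc⟩ :=
              path_split hoW hoE hdisj heW heE hlD.2.1
                (chain'_iff_covers.mp hlD.2.2.2)
            have hcovh1 : covers l1 h := by
              rcases covers_append_cases hcovh with hc | hc | hc
              · exact hc
              · exact absurd (hE2 _ (covers_mem hc).1)
                  (fun hq => ctx_notE hdisj (hoW.1 _ hXWW'.1).1 hq)
              · exact absurd (hE2 _ (List.mem_of_mem_head? hc.2))
                  (fun hq => ctx_notE hdisj (hoW.1 _ hXWW'.1).2 hq)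
            have hl1ne : l1 ≠ [] := by
              intro hq; rw [hq] at hcovh1; exact covers_nil _ hcovh1
            have hl1D := isPath_append_left hlD hl1ne
            obtain ⟨hl1W, hl1cov⟩ := pathW_of_D hoW hoE hdisj heW heE hl1D hW1
            have hbnot1 : eW.2 ∉ l1 := by
              intro hq
              exact (cut_verts_mem.mp (hlD.2.1 eW.2 (List.mem_append_left _ hq))).2.1 rfl
            rcases covers_append_cases hcovg with hg | hg | hg
            · rcases hjunc with hj | hj | hj
              · exact absurd hj hl1ne
              · have := hpathsW l1 hl1W hcovh1 g hg
                exact (yx_W_Wside hoW hoE hdisj heW heE hPW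
                  (hl1cov g hg).1 (hl1cov g hg).2 Y).mpr this
              · have hp := extend_to_b hoW heW hl1W hbnot1 hj.1
                have := hpathsW (l1 ++ [eW.2]) hp (covers_append_left hcovh1)
                  g (covers_append_left hg)
                exact (yx_W_Wside hoW hoE hdisj heW heE hPW
                  (hl1cov g hg).1 (hl1cov g hg).2 Y).mpr this
            · have hl2ne : l2 ≠ [] := by
                intro hq; rw [hq] at hg; exact covers_nil _ hg
              rcases hjunc with hj | hj | hj
              · exact absurd hj hl1ne
              · exact absurd hj hl2ne
              · have hl2D := isPath_append_right hlD hl2ne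
                obtain ⟨hl2E, hl2cov⟩ := pathE_of_D hoW hoE hdisj heW heE hl2D hE2
                have hcnot2 : eE.1 ∉ l2 := by
                  intro hq
                  exact (cut_verts_mem.mp
                    (hlD.2.1 eE.1 (List.mem_append_right _ hq))).2.2 rfl
                have hp := extend_to_c hoE heE hl2E hcnot2 hj.2
                have hcoveE : covers (eE.1 :: l2) eE := by
                  cases l2 with
                  | nil => exact absurd rfl hl2ne
                  | cons y t =>
                    have hy : y = eE.2 := by simpa using hj.2
                    have : (eE.1, y) = eE := prod_ext' rfl hy
                    rw [← this]
                    exact covers_head₂ _ _ _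
                have := hpathsE (eE.1 :: l2) hp hcoveE g (covers_of_covers_tail hg)
                exact (yx_W_Eside hoW hoE hdisj heW heE hPE
                  (hl2cov g hg).1 (hl2cov g hg).2 Y).mpr this
            · rcases hjunc with hj | hj | hj
              · exact absurd hj hl1ne
              · exfalso
                rw [hj] at hg
                simp at hg
              · have hg1 : g.1 = eW.1 := by
                  rw [hj.1] at hg
                  exact (Option.some.inj hg.1).symm
                have hg2 : g.2 = eE.2 := by
                  rw [hj.2] at hg
                  exact (Option.some.inj hg.2).symm
                rw [prod_ext' (q := (eW.1, eE.2)) hg1 hg2]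
                exact (yx_W_new hoW hoE hdisj heW heE hPE hnbE Y).mpr hLd
          · rw [if_neg hcE] at heq'
            have hhE : h ∈ GE.rootGraph.edges := by
              rw [heq']; exact (distEdge hE Y XDir.W).1
            obtain ⟨hXWE, hpathsE⟩ := (ihE h hhE).mp heq'
            have hXWE' : GE.rootGraph.isWEdge h := hXWE
            have hneE : h ≠ eE := by
              rw [heq']; exact fun hq => hcE hq.symm
            have hne1 : h.1 ≠ eE.1 := (Eside_edge heE hXWE'.1 hneE).1
            have hWD : (DG.cut GW.rootGraph GE.rootGraph eW eE).isWVert h.1 :=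
              (tW_E hoW hoE hdisj heW heE (hoE.1 _ hXWE'.1).1 hne1).mpr hXWE'.2
            obtain ⟨t', hlt⟩ := covers_first
              (S := fun g => g ∈ (DG.cut GW.rootGraph GE.rootGraph eW eE).edges)
              (chain'_iff_covers.mp hlD.2.2.2) hcovh (fun u => hWD.2 u)
            have hallE : ∀ v ∈ l, v ∈ GE.rootGraph.verts := by
              refine absorbE hoW hoE hdisj heW heE
                (chain'_iff_covers.mp hlD.2.2.2) ?_ (hoE.1 _ hXWE'.1).1
              rw [hlt]; rfl
            obtain ⟨hlE, hlcov⟩ := pathE_of_D hoW hoE hdisj heW heE hlD hallE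
            have := hpathsE l hlE hcovh g hcovg
            exact (yx_W_Eside hoW hoE hdisj heW heE hPE
              (hlcov g hcovg).1 (hlcov g hcovg).2 Y).mpr this
      · rintro ⟨hXh, hpaths⟩
        have hXh' : (DG.cut GW.rootGraph GE.rootGraph eW eE).isWEdge h := hXh
        show h = ε Y XDir.W
        rcases cut_edges_mem.mp hh' with hn | hn | hn
        · exfalso
          have hinnaD := (innW hoW hoE hdisj heW heE (ctx_a_mem hoW heW)
            (ctx_ab_ne hoW heW)).mpr (innerA hoW heW hnbW)
          obtain ⟨u, hu⟩ := hinnaD.2.1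
          apply hXh'.2.2 u
          rw [show h.1 = eW.1 by rw [hn]]
          exact hu
        · have hXWW : GW.rootGraph.isWEdge h :=
            ⟨hn.1, (tW_W hoW hoE hdisj heW heE (hoW.1 _ hn.1).1
              (Wside_edge heW hn.1 hn.2).1).mp hXh'.2⟩
          have hneW : h ≠ eW := hn.2
          have hpathsW : ∀ p, GW.rootGraph.IsPath p → covers p h →
              ∀ g, covers p g → YXedge GW.rootGraph (lamG GW) Y XDir.W g := by
            intro p hp hpc g hpg
            by_cases hbp : eW.2 ∈ p
            · have hlast : p.getLast? = some eW.2 :=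
                mem_last_of_no_succ (S := fun g => g ∈ GW.rootGraph.edges)
                  (chain'_iff_covers.mp hp.2.2.2) hbp (fun u => heW.1.2.2 u)
              have hpq := decomp_last hlast
              have hqne : p.dropLast ≠ [] := by
                have h2 := covers_length hpc
                have h3 : p.dropLast.length = p.length - 1 := List.length_dropLast
                intro hq0
                rw [hq0] at h3
                simp at h3
                omega
              obtain ⟨x, hx⟩ := getLast?_exists hqne
              have hxa : x = eW.1 := by
                apply heW.2
                have hcj : covers p (x, eW.2) := by
                  conv_lhs => rw [hpq]
                  exact covers_append_junction hx rfl
                exact chain'_iff_covers.mp hp.2.2.2 _ hcj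
              rw [hxa] at hx
              have hqpath : GW.rootGraph.IsPath (p.dropLast ++ [eW.2]) := by
                rw [← hpq]; exact hp
              have hrpath : GE.rootGraph.IsPath (eE.1 :: [eE.2]) :=
                isPath_two (hoE.1 _ heE.1.1).1 (hoE.1 _ heE.1.1).2
                  (ctx_cd_ne hoE heE) ((Prod.mk.eta (p := eE)).symm ▸ heE.1.1)
              obtain ⟨hjp, hql, hrh, hqcov, hrcov⟩ :=
                join_path hoW hoE hdisj heW heE hqpath hrpath hqne (by simp)
              have hcovhq : covers p.dropLast h := by
                have hch : covers (p.dropLast ++ [eW.2]) h := by rw [← hpq]; exact hpc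
                rcases covers_append_cases hch with hc | hc | hc
                · exact hc
                · exact absurd hc (covers_single _ _)
                · exfalso
                  have h2 : h.2 = eW.2 := by
                    have h2' := hc.2
                    simp at h2'
                    omega
                  have h1 : h.1 = eW.1 := by
                    apply heW.2
                    rw [← h2]
                    exact (Prod.mk.eta (p := h)).symm ▸ hXWW.1
                  exact hneW (prod_ext' h1 h2)
              have happly := hpaths (p.dropLast ++ [eE.2]) hjp (covers_append_left hcovhq)
              have hgp : covers (p.dropLast ++ [eW.2]) g := by rw [← hpq]; exact hpg
              rcases covers_append_cases hgp with hgq | hgq | hgq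
              · exact (yx_W_Wside hoW hoE hdisj heW heE hPW
                  (hqcov g hgq).1 (hqcov g hgq).2 Y).mp
                  (happly g (covers_append_left hgq))
              · exact absurd hgq (covers_single _ _)
              · have hg2 : g.2 = eW.2 := by
                  have h2' := hgq.2
                  simp at h2'
                  omega
                have hg1 : g.1 = eW.1 := by
                  rw [hx] at hgq
                  exact (Option.some.inj hgq.1).symm
                rw [prod_ext' (q := eW) hg1 hg2]
                exact ⟨heW.1.1, Or.inr heW.1⟩
            · have hpD := pathD_of_W hoW hoE hdisj heW heE hp hbp
              have := hpaths p hpD hpc g hpg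
              have hgW : g ∈ GW.rootGraph.edges :=
                chain'_iff_covers.mp hp.2.2.2 g hpg
              have hgne : g ≠ eW := by
                intro hq
                apply hbp
                rw [← show g.2 = eW.2 by rw [hq]]
                exact (covers_mem hpg).2
              exact (yx_W_Wside hoW hoE hdisj heW heE hPW hgW hgne Y).mp this
          have hW' := (ihW h hn.1).mpr ⟨hXWW, hpathsW⟩
          by_cases hcE : eE = GE.dist Y XDir.W
          · rw [hεW Y, if_pos hcE]; exact hW'
          · exfalso
            have hcW : eW = GW.dist Y XDir.E := (hXYC Y).resolve_right hcE
            have hnotB : ¬ (∀ m, GE.rootGraph.IsPath m → covers m eE →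
                ∀ g, covers m g → YXedge GE.rootGraph (lamG GE) Y XDir.W g) :=
              fun hB => hcE ((ihE eE heE.1.1).mpr ⟨heE.1, hB⟩)
            push_neg at hnotB
            obtain ⟨m, hm, hmcov, g0, hg0cov, hg0bad⟩ := hnotB
            obtain ⟨m', hm'⟩ := covers_first
              (S := fun g => g ∈ GE.rootGraph.edges)
              (chain'_iff_covers.mp hm.2.2.2) hmcov (fun u => heE.1.2.2 u)
            obtain ⟨pP, sP, tP, hpP, hpP1, hpP2⟩ := existsP hW Y
            rw [← hcW] at hpP2
            rw [← hW'] at hpP1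
            have hne1 : ¬ (h.1 = eW.1 ∧ h.2 = eW.2) :=
              fun hq => hneW (prod_ext' hq.1 hq.2)
            obtain ⟨s', hpeq, hqlast⟩ := path_surgery hpP1 hpP2 hne1
            have hqpath : GW.rootGraph.IsPath ((h.1 :: h.2 :: s') ++ [eW.2]) := by
              rw [← hpeq]; exact hpP
            have hrpath : GE.rootGraph.IsPath (eE.1 :: eE.2 :: m') := by
              rw [← hm']; exact hm
            obtain ⟨hjp, hql2, hrh2, hqcov2, hrcov2⟩ :=
              join_path hoW hoE hdisj heW heE hqpath hrpath (by simp) (by simp)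
            have hcovh0 : covers ((h.1 :: h.2 :: s') ++ (eE.2 :: m')) h :=
              covers_append_left (covers_of_struct rfl)
            have happly := hpaths _ hjp hcovh0
            rw [hm'] at hg0cov
            rcases covers_cons₂.mp hg0cov with hg00 | hg00
            · have hg0eE : g0 = eE := by rw [hg00]
              have hnewcov : covers ((h.1 :: h.2 :: s') ++ (eE.2 :: m')) (eW.1, eE.2) :=
                covers_append_junction hqlast rfl
              have hval := (yx_W_new hoW hoE hdisj heW heE hPE hnbE Y).mp
                (happly _ hnewcov)
              rw [hg0eE] at hg0bad
              exact hg0bad ⟨heE.1.1, Or.inl hval⟩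
            · have := happly g0 (covers_append_right hg00)
              exact hg0bad ((yx_W_Eside hoW hoE hdisj heW heE hPE
                (hrcov2 g0 hg00).1 (hrcov2 g0 hg00).2 Y).mp this)
        · have hne1E : h.1 ≠ eE.1 := by
            intro hq
            apply hn.2
            refine prod_ext' hq ?_
            apply heE.2
            rw [← hq]
            exact (Prod.mk.eta (p := h)).symm ▸ hn.1
          have hXWE : GE.rootGraph.isWEdge h :=
            ⟨hn.1, (tW_E hoW hoE hdisj heW heE (hoE.1 _ hn.1).1 hne1E).mp hXh'.2⟩
          have hpathsE : ∀ m, GE.rootGraph.IsPath m → covers m h →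
              ∀ g, covers m g → YXedge GE.rootGraph (lamG GE) Y XDir.W g := by
            intro m hm hmc g hmg
            by_cases hcp : eE.1 ∈ m
            · have hhead : m.head? = some eE.1 :=
                mem_head_of_no_pred (S := fun g => g ∈ GE.rootGraph.edges)
                  (chain'_iff_covers.mp hm.2.2.2) hcp (fun u => heE.1.2.2 u)
              cases m with
              | nil => simp at hhead
              | cons z t =>
                have hz : z = eE.1 := by simpa using hhead
                subst hz
                cases t with
                | nil => exact absurd hmc (covers_single _ _)
                | cons y t' =>
                  have hy : y = eE.2 := heE.2 y
                    (chain'_iff_covers.mp hm.2.2.2 _ (covers_head₂ _ _ _))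
                  subst hy
                  have htnodup := hm.2.2.1
                  rw [List.nodup_cons] at htnodup
                  have htE : ∀ v ∈ eE.2 :: t', v ∈ GE.rootGraph.verts :=
                    fun v hv => hm.2.1 v (List.mem_cons_of_mem _ hv)
                  have htcov : ∀ g', covers (eE.2 :: t') g' →
                      g' ∈ GE.rootGraph.edges ∧ g' ≠ eE := by
                    intro g' hg'
                    refine ⟨chain'_iff_covers.mp hm.2.2.2 g'
                      (covers_of_covers_tail hg'), ?_⟩
                    intro hq
                    apply htnodup.1
                    rw [← show g'.1 = eE.1 by rw [hq]]
                    exact (covers_mem hg').1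
                  have hl'path : (DG.cut GW.rootGraph GE.rootGraph eW eE).IsPath
                      (eW.1 :: eE.2 :: t') := by
                    refine ⟨by simp, ?_, ?_, ?_⟩
                    · intro v hv
                      rcases List.mem_cons.mp hv with rfl | hv
                      · exact vW_memD hoE hdisj heE (ctx_a_mem hoW heW)
                          (ctx_ab_ne hoW heW)
                      · refine vE_memD hoW hdisj heW (htE v hv) ?_
                        intro hq
                        exact htnodup.1 (hq ▸ hv)
                    · rw [List.nodup_cons]
                      refine ⟨?_, htnodup.2⟩
                      intro hq
                      exact ctx_notE hdisj (ctx_a_mem hoW heW) (htE _ hq)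
                    · rw [chain'_iff_covers]
                      intro g' hg'
                      rcases covers_cons₂.mp hg' with rfl | hg'
                      · exact memD_new
                      · exact memD_of_E (htcov g' hg').1 (htcov g' hg').2
                  have hcovh' : covers (eE.2 :: t') h := by
                    rcases covers_cons₂.mp hmc with hc | hc
                    · exact absurd (hc.trans Prod.mk.eta) hn.2
                    · exact hc
                  have happly := hpaths (eW.1 :: eE.2 :: t') hl'path
                    (covers_of_covers_tail hcovh')
                  rcases covers_cons₂.mp hmg with hgc | hgc
                  · have hval := (yx_W_new hoW hoE hdisj heW heE hPE hnbE Y).mp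
                      (happly _ (covers_head₂ _ _ _))
                    rw [show g = eE from hgc.trans Prod.mk.eta]
                    exact ⟨heE.1.1, Or.inl hval⟩
                  · exact (yx_W_Eside hoW hoE hdisj heW heE hPE
                      (htcov g hgc).1 (htcov g hgc).2 Y).mp
                      (happly g (covers_of_covers_tail hgc))
            · have hmD := pathD_of_E hoW hoE hdisj heW heE hm hcp
              have := hpaths m hmD hmc g hmg
              have hgE : g ∈ GE.rootGraph.edges :=
                chain'_iff_covers.mp hm.2.2.2 g hmg
              have hgne : g ≠ eE := by
                intro hq
                apply hcp
                rw [← show g.1 = eE.1 by rw [hq]]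
                exact (covers_mem hmg).1
              exact (yx_W_Eside hoW hoE hdisj heW heE hPE hgE hgne Y).mp this
          have hE' := (ihE h hn.1).mpr ⟨hXWE, hpathsE⟩
          have hcE : ¬ (eE = GE.dist Y XDir.W) := fun hq => hn.2 (by rw [hE', ← hq])
          rw [hεW Y, if_neg hcE]
          exact hE'
    | E =>
      constructor
      · intro heq
        have heq' : h = ε Y XDir.E := heq
        constructor
        · rw [heq]
          exact distEdge hGnode Y XDir.E
        · intro l hl hcovh g hcovg
          have hlD : (DG.cut GW.rootGraph GE.rootGraph eW eE).IsPath l := hl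
          rw [hεE Y] at heq'
          by_cases hcW : eW = GW.dist Y XDir.E
          · rw [if_pos hcW] at heq'
            have hhE : h ∈ GE.rootGraph.edges := by
              rw [heq']; exact (distEdge hE Y XDir.E).1
            obtain ⟨hXEE, hpathsE⟩ := (ihE h hhE).mp heq'
            have hXEE' : GE.rootGraph.isEEdge h := hXEE
            have hneE : h ≠ eE := fun hq => hnbE _ (hq ▸ heE.1) hXEE'
            obtain ⟨hXWW0, hpathsW'⟩ := (ihW eW heW.1.1).mp hcW
            have hLa : lamG GW eW.1 Y XDir.E = eW := by
              have hp2 : GW.rootGraph.IsPath [eW.1, eW.2] :=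
                isPath_two (hoW.1 _ heW.1.1).1 (hoW.1 _ heW.1.1).2
                  (ctx_ab_ne hoW heW) ((Prod.mk.eta (p := eW)).symm ▸ heW.1.1)
              have hcov2 : covers [eW.1, eW.2] eW := covers_of_struct rfl
              have hyx := hpathsW' [eW.1, eW.2] hp2 hcov2 eW hcov2
              rcases hyx.2 with hL | hWW2
              · exact hL
              · exact absurd heW.1 (hnbW eW hWW2)
            obtain ⟨l1, l2, rfl, hW1, hE2, hjunc⟩ :=
              path_split hoW hoE hdisj heW heE hlD.2.1
                (chain'_iff_covers.mp hlD.2.2.2)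
            have hcovh2 : covers l2 h := by
              rcases covers_append_cases hcovh with hc | hc | hc
              · exact absurd (hW1 _ (covers_mem hc).1)
                  (ctx_notW hdisj (hoE.1 _ hXEE'.1).1)
              · exact hc
              · exfalso
                have hmem1 : h.1 ∈ l1 := by
                  have hc1 := hc.1
                  rw [← List.head?_reverse] at hc1
                  exact List.mem_reverse.mp (List.mem_of_mem_head? hc1)
                exact ctx_notW hdisj (hoE.1 _ hXEE'.1).1 (hW1 _ hmem1)
            have hl2ne : l2 ≠ [] := by
              intro hq; rw [hq] at hcovh2; exact covers_nil _ hcovh2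
            have hl2D := isPath_append_right hlD hl2ne
            obtain ⟨hl2E, hl2cov⟩ := pathE_of_D hoW hoE hdisj heW heE hl2D hE2
            have hcnot2 : eE.1 ∉ l2 := by
              intro hq
              exact (cut_verts_mem.mp (hlD.2.1 eE.1 (List.mem_append_right _ hq))).2.2 rfl
            rcases covers_append_cases hcovg with hg | hg | hg
            · -- g in l1: use the IH information about eW on the W side
              rcases hjunc with hj | hj | hj
              · exfalso; rw [hj] at hg; exact covers_nil _ hg
              · exact absurd hj hl2ne
              · have hl1ne : l1 ≠ [] := by
                  intro hq; rw [hq] at hg; exact covers_nil _ hg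
                have hl1D := isPath_append_left hlD hl1ne
                obtain ⟨hl1W, hl1cov⟩ := pathW_of_D hoW hoE hdisj heW heE hl1D hW1
                have hbnot1 : eW.2 ∉ l1 := by
                  intro hq
                  exact (cut_verts_mem.mp
                    (hlD.2.1 eW.2 (List.mem_append_left _ hq))).2.1 rfl
                have hp := extend_to_b hoW heW hl1W hbnot1 hj.1
                have hcoveW : covers (l1 ++ [eW.2]) eW :=
                  covers_append_junction hj.1 rfl
                have := hpathsW' (l1 ++ [eW.2]) hp hcoveW g (covers_append_left hg)
                exact (yx_E_Wside hoW hoE hdisj heW heE hPW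
                  (hl1cov g hg).1 (hl1cov g hg).2 Y).mpr this
            · -- g in l2
              rcases hjunc with hj | hj | hj
              · -- l1 = [] : l = l2
                have hleq : l1 ++ l2 = l2 := by rw [hj]; rfl
                have := hpathsE l2 hl2E hcovh2 g hg
                exact (yx_E_Eside hoW hoE hdisj heW heE hPE
                  (hl2cov g hg).1 (hl2cov g hg).2 Y).mpr this
              · exact absurd hj hl2ne
              · have hp := extend_to_c hoE heE hl2E hcnot2 hj.2
                have := hpathsE (eE.1 :: l2) hp (covers_of_covers_tail hcovh2)
                  g (covers_of_covers_tail hg)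
                exact (yx_E_Eside hoW hoE hdisj heW heE hPE
                  (hl2cov g hg).1 (hl2cov g hg).2 Y).mpr this
            · -- junction edge
              rcases hjunc with hj | hj | hj
              · exfalso; rw [hj] at hg; simp at hg
              · exact absurd hj hl2ne
              · have hg1 : g.1 = eW.1 := by
                  rw [hj.1] at hg
                  exact (Option.some.inj hg.1).symm
                have hg2 : g.2 = eE.2 := by
                  rw [hj.2] at hg
                  exact (Option.some.inj hg.2).symm
                rw [prod_ext' (q := (eW.1, eE.2)) hg1 hg2]
                exact (yx_E_new hoW hoE hdisj heW heE hPW hnbW Y).mpr hLa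
          · rw [if_neg hcW] at heq'
            have hhW : h ∈ GW.rootGraph.edges := by
              rw [heq']; exact (distEdge hW Y XDir.E).1
            obtain ⟨hXEW, hpathsW⟩ := (ihW h hhW).mp heq'
            have hXEW' : GW.rootGraph.isEEdge h := hXEW
            have hneW : h ≠ eW := by
              rw [heq']; exact fun hq => hcW hq.symm
            have hne2 : h.2 ≠ eW.2 := (Wside_edge heW hXEW'.1 hneW).2
            have hED : (DG.cut GW.rootGraph GE.rootGraph eW eE).isEVert h.2 :=
              (tE_W hoW hoE hdisj heW heE (hoW.1 _ hXEW'.1).2 hne2).mpr hXEW'.2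
            obtain ⟨t', hlt⟩ := covers_last
              (S := fun g => g ∈ (DG.cut GW.rootGraph GE.rootGraph eW eE).edges)
              (chain'_iff_covers.mp hlD.2.2.2) hcovh (fun u => hED.2 u)
            have hlast : l.getLast? = some h.2 := by
              rw [← List.head?_reverse, hlt]
              rfl
            have hallW : ∀ v ∈ l, v ∈ GW.rootGraph.verts :=
              absorbW hoW hoE hdisj heW heE
                (chain'_iff_covers.mp hlD.2.2.2) hlast (hoW.1 _ hXEW'.1).2
            obtain ⟨hlW, hlcov⟩ := pathW_of_D hoW hoE hdisj heW heE hlD hallW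
            have := hpathsW l hlW hcovh g hcovg
            exact (yx_E_Wside hoW hoE hdisj heW heE hPW
              (hlcov g hcovg).1 (hlcov g hcovg).2 Y).mpr this
      · rintro ⟨hXh, hpaths⟩
        have hXh' : (DG.cut GW.rootGraph GE.rootGraph eW eE).isEEdge h := hXh
        show h = ε Y XDir.E
        rcases cut_edges_mem.mp hh' with hn | hn | hn
        · exfalso
          have hinndD := (innE hoW hoE hdisj heW heE (ctx_d_mem hoE heE)
            (Ne.symm (ctx_cd_ne hoE heE))).mpr (innerD hoE heE hnbE)
          obtain ⟨w, hw⟩ := hinndD.2.2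
          apply hXh'.2.2 w
          rw [show h.2 = eE.2 by rw [hn]]
          exact hw
        · -- W side
          have hne2W : h.2 ≠ eW.2 := by
            intro hq
            apply hn.2
            refine prod_ext' ?_ hq
            apply heW.2
            rw [← hq]
            exact (Prod.mk.eta (p := h)).symm ▸ hn.1
          have hXEW : GW.rootGraph.isEEdge h :=
            ⟨hn.1, (tE_W hoW hoE hdisj heW heE (hoW.1 _ hn.1).2 hne2W).mp hXh'.2⟩
          have hpathsW : ∀ p, GW.rootGraph.IsPath p → covers p h →
              ∀ g, covers p g → YXedge GW.rootGraph (lamG GW) Y XDir.E g := by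
            intro p hp hpc g hpg
            by_cases hbp : eW.2 ∈ p
            · have hlast : p.getLast? = some eW.2 :=
                mem_last_of_no_succ (S := fun g => g ∈ GW.rootGraph.edges)
                  (chain'_iff_covers.mp hp.2.2.2) hbp (fun u => heW.1.2.2 u)
              have hpq := decomp_last hlast
              have hqne : p.dropLast ≠ [] := by
                have h2 := covers_length hpc
                have h3 : p.dropLast.length = p.length - 1 := List.length_dropLast
                intro hq0
                rw [hq0] at h3
                simp at h3
                omega
              obtain ⟨x, hx⟩ := getLast?_exists hqne
              have hxa : x = eW.1 := by
                apply heW.2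
                have hcj : covers p (x, eW.2) := by
                  conv_lhs => rw [hpq]
                  exact covers_append_junction hx rfl
                exact chain'_iff_covers.mp hp.2.2.2 _ hcj
              rw [hxa] at hx
              have hqpath : GW.rootGraph.IsPath (p.dropLast ++ [eW.2]) := by
                rw [← hpq]; exact hp
              have hrpath : GE.rootGraph.IsPath (eE.1 :: [eE.2]) :=
                isPath_two (hoE.1 _ heE.1.1).1 (hoE.1 _ heE.1.1).2
                  (ctx_cd_ne hoE heE) ((Prod.mk.eta (p := eE)).symm ▸ heE.1.1)
              obtain ⟨hjp, hql, hrh, hqcov, hrcov⟩ :=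
                join_path hoW hoE hdisj heW heE hqpath hrpath hqne (by simp)
              have hcovhq : covers p.dropLast h := by
                have hch : covers (p.dropLast ++ [eW.2]) h := by rw [← hpq]; exact hpc
                rcases covers_append_cases hch with hc | hc | hc
                · exact hc
                · exact absurd hc (covers_single _ _)
                · exfalso
                  apply hne2W
                  have h2' := hc.2
                  simp at h2'
                  omega
              have happly := hpaths (p.dropLast ++ [eE.2]) hjp (covers_append_left hcovhq)
              have hgp : covers (p.dropLast ++ [eW.2]) g := by rw [← hpq]; exact hpg
              rcases covers_append_cases hgp with hgq | hgq | hgq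
              · exact (yx_E_Wside hoW hoE hdisj heW heE hPW
                  (hqcov g hgq).1 (hqcov g hgq).2 Y).mp
                  (happly g (covers_append_left hgq))
              · exact absurd hgq (covers_single _ _)
              · have hg2 : g.2 = eW.2 := by
                  have h2' := hgq.2
                  simp at h2'
                  omega
                have hg1 : g.1 = eW.1 := by
                  rw [hx] at hgq
                  exact (Option.some.inj hgq.1).symm
                have hval := (yx_E_new hoW hoE hdisj heW heE hPW hnbW Y).mp
                  (happly _ (covers_append_junction hx rfl))
                rw [prod_ext' (q := eW) hg1 hg2]
                exact ⟨heW.1.1, Or.inl hval⟩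
            · have hpD := pathD_of_W hoW hoE hdisj heW heE hp hbp
              have := hpaths p hpD hpc g hpg
              have hgW : g ∈ GW.rootGraph.edges :=
                chain'_iff_covers.mp hp.2.2.2 g hpg
              have hgne : g ≠ eW := by
                intro hq
                apply hbp
                rw [← show g.2 = eW.2 by rw [hq]]
                exact (covers_mem hpg).2
              exact (yx_E_Wside hoW hoE hdisj heW heE hPW hgW hgne Y).mp this
          have hW' := (ihW h hn.1).mpr ⟨hXEW, hpathsW⟩
          have hcW : ¬ (eW = GW.dist Y XDir.E) := fun hq => hn.2 (by rw [hW', ← hq])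
          rw [hεE Y, if_neg hcW]
          exact hW'
        · -- E side
          have hXEE : GE.rootGraph.isEEdge h :=
            ⟨hn.1, (tE_E hoW hoE hdisj heW heE (hoE.1 _ hn.1).2
              (Eside_edge heE hn.1 hn.2).2).mp hXh'.2⟩
          have hpathsE : ∀ m, GE.rootGraph.IsPath m → covers m h →
              ∀ g, covers m g → YXedge GE.rootGraph (lamG GE) Y XDir.E g := by
            intro m hm hmc g hmg
            by_cases hcp : eE.1 ∈ m
            · have hhead : m.head? = some eE.1 :=
                mem_head_of_no_pred (S := fun g => g ∈ GE.rootGraph.edges)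
                  (chain'_iff_covers.mp hm.2.2.2) hcp (fun u => heE.1.2.2 u)
              cases m with
              | nil => simp at hhead
              | cons z t =>
                have hz : z = eE.1 := by simpa using hhead
                subst hz
                cases t with
                | nil => exact absurd hmc (covers_single _ _)
                | cons y t' =>
                  have hy : y = eE.2 := heE.2 y
                    (chain'_iff_covers.mp hm.2.2.2 _ (covers_head₂ _ _ _))
                  subst hy
                  have htnodup := hm.2.2.1
                  rw [List.nodup_cons] at htnodup
                  have htE : ∀ v ∈ eE.2 :: t', v ∈ GE.rootGraph.verts :=
                    fun v hv => hm.2.1 v (List.mem_cons_of_mem _ hv)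
                  have htcov : ∀ g', covers (eE.2 :: t') g' →
                      g' ∈ GE.rootGraph.edges ∧ g' ≠ eE := by
                    intro g' hg'
                    refine ⟨chain'_iff_covers.mp hm.2.2.2 g'
                      (covers_of_covers_tail hg'), ?_⟩
                    intro hq
                    apply htnodup.1
                    rw [← show g'.1 = eE.1 by rw [hq]]
                    exact (covers_mem hg').1
                  have hl'path : (DG.cut GW.rootGraph GE.rootGraph eW eE).IsPath
                      (eW.1 :: eE.2 :: t') := by
                    refine ⟨by simp, ?_, ?_, ?_⟩
                    · intro v hv
                      rcases List.mem_cons.mp hv with rfl | hv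
                      · exact vW_memD hoE hdisj heE (ctx_a_mem hoW heW)
                          (ctx_ab_ne hoW heW)
                      · refine vE_memD hoW hdisj heW (htE v hv) ?_
                        intro hq
                        exact htnodup.1 (hq ▸ hv)
                    · rw [List.nodup_cons]
                      refine ⟨?_, htnodup.2⟩
                      intro hq
                      exact ctx_notE hdisj (ctx_a_mem hoW heW) (htE _ hq)
                    · rw [chain'_iff_covers]
                      intro g' hg'
                      rcases covers_cons₂.mp hg' with rfl | hg'
                      · exact memD_new
                      · exact memD_of_E (htcov g' hg').1 (htcov g' hg').2
                  have hcovh' : covers (eE.2 :: t') h := by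
                    rcases covers_cons₂.mp hmc with hc | hc
                    · exact absurd (hc.trans Prod.mk.eta) hn.2
                    · exact hc
                  have happly := hpaths (eW.1 :: eE.2 :: t') hl'path
                    (covers_of_covers_tail hcovh')
                  rcases covers_cons₂.mp hmg with hgc | hgc
                  · rw [show g = eE from hgc.trans Prod.mk.eta]
                    exact ⟨heE.1.1, Or.inr heE.1⟩
                  · exact (yx_E_Eside hoW hoE hdisj heW heE hPE
                      (htcov g hgc).1 (htcov g hgc).2 Y).mp
                      (happly g (covers_of_covers_tail hgc))
            · have hmD := pathD_of_E hoW hoE hdisj heW heE hm hcp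
              have := hpaths m hmD hmc g hmg
              have hgE : g ∈ GE.rootGraph.edges :=
                chain'_iff_covers.mp hm.2.2.2 g hmg
              have hgne : g ≠ eE := by
                intro hq
                apply hcp
                rw [← show g.1 = eE.1 by rw [hq]]
                exact (covers_mem hmg).1
              exact (yx_E_Eside hoW hoE hdisj heW heE hPE hgE hgne Y).mp this
          have hE' := (ihE h hn.1).mpr ⟨hXEE, hpathsE⟩
          by_cases hcW : eW = GW.dist Y XDir.E
          · rw [hεE Y, if_pos hcW]; exact hE'
          · exfalso
            have hcE : eE = GE.dist Y XDir.W := (hXYC Y).resolve_left hcW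
            have hnotB : ¬ (∀ m, GW.rootGraph.IsPath m → covers m eW →
                ∀ g, covers m g → YXedge GW.rootGraph (lamG GW) Y XDir.E g) :=
              fun hB => hcW ((ihW eW heW.1.1).mpr ⟨heW.1, hB⟩)
            push_neg at hnotB
            obtain ⟨m, hm, hmcov, g0, hg0cov, hg0bad⟩ := hnotB
            obtain ⟨t0, hmrev⟩ := covers_last
              (S := fun g => g ∈ GW.rootGraph.edges)
              (chain'_iff_covers.mp hm.2.2.2) hmcov (fun u => heW.1.2.2 u)
            obtain ⟨hmdec, hq0last, hq0ne⟩ := rev_decomp hmrev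
            obtain ⟨pP, sP, tP, hpP, hpP1, hpP2⟩ := existsP hE Y
            rw [← hcE] at hpP1
            rw [← hE'] at hpP2
            have hqpath : GW.rootGraph.IsPath ((eW.1 :: t0).reverse ++ [eW.2]) := by
              rw [← hmdec]; exact hm
            have hrpath : GE.rootGraph.IsPath (eE.1 :: eE.2 :: sP) := by
              rw [← hpP1]; exact hpP
            obtain ⟨hjp, hql2, hrh2, hqcov2, hrcov2⟩ :=
              join_path hoW hoE hdisj heW heE hqpath hrpath hq0ne (by simp)
            have hcovh0 : covers ((eW.1 :: t0).reverse ++ (eE.2 :: sP)) h := by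
              apply covers_append_right
              have hcovpE : covers pP h := covers_of_reverse_struct hpP2
              rw [hpP1] at hcovpE
              rcases covers_cons₂.mp hcovpE with hc | hc
              · exact absurd (hc.trans Prod.mk.eta) hn.2
              · exact hc
            have happly := hpaths _ hjp hcovh0
            have hg0m : covers ((eW.1 :: t0).reverse ++ [eW.2]) g0 := by
              rw [← hmdec]; exact hg0cov
            rcases covers_append_cases hg0m with hg00 | hg00 | hg00
            · exact hg0bad ((yx_E_Wside hoW hoE hdisj heW heE hPW
                (hqcov2 g0 hg00).1 (hqcov2 g0 hg00).2 Y).mp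
                (happly g0 (covers_append_left hg00)))
            · exact absurd hg00 (covers_single _ _)
            · have hg2 : g0.2 = eW.2 := by
                have h2' := hg00.2
                simp at h2'
                omega
              have hg1 : g0.1 = eW.1 := by
                rw [hq0last] at hg00
                exact (Option.some.inj hg00.1).symm
              have hval := (yx_E_new hoW hoE hdisj heW heE hPW hnbW Y).mp
                (happly _ (covers_append_junction hq0last rfl))
              rw [prod_ext' (q := eW) hg1 hg2] at hg0bad
              exact hg0bad ⟨heW.1.1, Or.inl hval⟩

end PluralCuts
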